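/- arXiv:2002.01076 — 5 statements merged into one kernel-verified Lean document; each statement's English description precedes it below -/
import Mathlib

section
/- There exists an absolute constant C > 0 such that for any irrational α and any k ≥ 2, if q_k is the denominator of the k-th convergent of α, then ∑_{0<|q|<q_k} 1/‖qα‖² ≤ C q_k². -/
set_option linter.unusedSectionVars false
set_option maxHeartbeats 1000000

/-- Distance from a real number to the nearest integer. -/
noncomputable def nint (x : ℝ) : ℝ := |x - round x|

open GenContFract

namespace CFAux
variable {α : ℝ}

lemma not_term (h : Irrational α) (n : ℕ) : ¬(GenContFract.of α).TerminatedAt n := by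
  intro ht
  have hterm : (GenContFract.of α).Terminates := ⟨n, ht⟩
  rw [terminates_iff_rat] at hterm
  obtain ⟨qq, rfl⟩ := hterm
  exact Rat.not_irrational qq h

lemma exists_gp (h : Irrational α) (n : ℕ) :
    ∃ gp : GenContFract.Pair ℝ, (GenContFract.of α).s.get? n = some gp ∧ gp.a = 1 ∧ 1 ≤ gp.b ∧
      ∃ z : ℤ, gp.b = (z : ℝ) := by
  obtain ⟨gp, hgp⟩ := Option.ne_none_iff_exists'.1 (not_term h n)
  exact ⟨gp, hgp, of_partNum_eq_one (partNum_eq_s_a hgp),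
    of_one_le_get?_partDen (partDen_eq_s_b hgp),
    exists_int_eq_of_partDen (partDen_eq_s_b hgp)⟩

lemma num_int (h : Irrational α) : ∀ n, ∃ z : ℤ, (GenContFract.of α).nums n = (z : ℝ) := by
  have key : ∀ n, (∃ z : ℤ, (GenContFract.of α).nums n = (z:ℝ)) ∧ (∃ z : ℤ, (GenContFract.of α).nums (n+1) = (z:ℝ)) := by
    intro n
    induction n with
    | zero =>
      constructor
      · exact ⟨⌊α⌋, by rw [zeroth_num_eq_h, of_h_eq_floor]⟩
      · obtain ⟨gp, hgp, ha, hb, z, hz⟩ := exists_gp h 0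
        exact ⟨z * ⌊α⌋ + 1, by rw [first_num_eq hgp, ha, hz, of_h_eq_floor]; push_cast; ring⟩
    | succ n ih =>
      refine ⟨ih.2, ?_⟩
      obtain ⟨gp, hgp, ha, hb, z, hz⟩ := exists_gp h (n+1)
      obtain ⟨z0, hz0⟩ := ih.1
      obtain ⟨z1, hz1⟩ := ih.2
      exact ⟨z * z1 + z0, by rw [nums_recurrence hgp hz0 hz1, ha, hz]; push_cast; ring⟩
  exact fun n => (key n).1


section
variable (h : Irrational α) {q : ℕ → ℕ} (hq : ∀ n, (q n : ℝ) = (GenContFract.of α).dens n)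
  {p : ℕ → ℤ} (hp : ∀ n, (GenContFract.of α).nums n = (p n : ℝ))

include h hq

lemma q_one_le (n : ℕ) : 1 ≤ q n := by
  have h1 : ((Nat.fib (n+1) : ℕ) : ℝ) ≤ (GenContFract.of α).dens n :=
    succ_nth_fib_le_of_nth_den (Or.inr (not_term h (n-1)))
  have h2 : (1:ℝ) ≤ (q n : ℝ) := by
    rw [hq]
    refine le_trans ?_ h1
    have : 1 ≤ Nat.fib (n+1) := Nat.fib_pos.2 (Nat.succ_pos n)
    exact_mod_cast this
  exact_mod_cast h2

lemma q_mono (n : ℕ) : (q n : ℝ) ≤ (q (n+1) : ℝ) := by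
  rw [hq, hq]; exact of_den_mono

lemma q_grow (n : ℕ) : (q n : ℝ) + (q (n+1) : ℝ) ≤ (q (n+2) : ℝ) := by
  obtain ⟨gp, hgp, ha, hb, _⟩ := exists_gp h (n+1)
  have hr : (GenContFract.of α).dens (n+2) = gp.b * (GenContFract.of α).dens (n+1)
      + gp.a * (GenContFract.of α).dens n := dens_recurrence hgp rfl rfl
  have h0 : (1:ℝ) ≤ (q n : ℝ) := by exact_mod_cast q_one_le h hq n
  have h1 : (1:ℝ) ≤ (q (n+1) : ℝ) := by exact_mod_cast q_one_le h hq (n+1)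
  rw [hq, hq, hq] at *
  rw [hr, ha]
  nlinarith

include hp

lemma det_int (n : ℕ) :
    p n * (q (n+1) : ℤ) - (q n : ℤ) * p (n+1) = (-1)^(n+1) := by
  have hdet := SimpContFract.determinant
    (s := ⟨GenContFract.of α, GenContFract.of_isSimpContFract α⟩) (K := ℝ) (n := n)
    (not_term h n)
  have hdet' : (GenContFract.of α).nums n * (GenContFract.of α).dens (n+1)
      - (GenContFract.of α).dens n * (GenContFract.of α).nums (n+1) = (-1)^(n+1) := hdet
  rw [hp, hp, ← hq, ← hq] at hdet'
  have : ((p n * (q (n+1) : ℤ) - (q n : ℤ) * p (n+1) : ℤ) : ℝ)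
      = (((-1)^(n+1) : ℤ) : ℝ) := by push_cast; linarith
  exact_mod_cast this

lemma e_bound (n : ℕ) : |(q n : ℝ) * α - p n| ≤ 1 / (q (n+1) : ℝ) := by
  have h1 := abs_sub_convs_le (v := α) (n := n) (not_term h n)
  rw [← hq, ← hq] at h1
  have hd0 : (0:ℝ) < (q n : ℝ) := by
    have := q_one_le h hq n; exact_mod_cast Nat.lt_of_lt_of_le Nat.zero_lt_one this
  have hd1 : (0:ℝ) < (q (n+1) : ℝ) := by
    have := q_one_le h hq (n+1); exact_mod_cast Nat.lt_of_lt_of_le Nat.zero_lt_one this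
  have he : (q n : ℝ) * α - p n = (q n : ℝ) * (α - (GenContFract.of α).convs n) := by
    rw [conv_eq_num_div_den, hp, ← hq]; field_simp
  rw [he, abs_mul, abs_of_pos hd0]
  calc (q n : ℝ) * |α - (GenContFract.of α).convs n|
      ≤ (q n : ℝ) * (1 / ((q n : ℝ) * (q (n+1) : ℝ))) := mul_le_mul_of_nonneg_left h1 hd0.le
    _ = 1 / (q (n+1) : ℝ) := by field_simp

lemma sign_fact (n : ℕ) :
    1/2 ≤ (-1:ℝ)^n * (((q n : ℝ) * α - p n) * (q (n+1) : ℝ)) := by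
  have hdet := det_int h hq hp n
  have hdetR : (p n : ℝ) * (q (n+1) : ℝ) - (q n : ℝ) * (p (n+1) : ℝ) = (-1)^(n+1) := by
    exact_mod_cast congrArg (Int.cast : ℤ → ℝ) hdet
  have hpow : ((-1:ℝ))^(n+1) = -(-1:ℝ)^n := by rw [pow_succ]; ring
  rw [hpow] at hdetR
  have hid : ((q n : ℝ) * α - p n) * (q (n+1) : ℝ)
      = (-1:ℝ)^n + ((q (n+1) : ℝ) * α - p (n+1)) * (q n : ℝ) := by
    linear_combination -hdetR
  have ht : |((q (n+1) : ℝ) * α - p (n+1)) * (q n : ℝ)| ≤ 1/2 := by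
    rw [abs_mul, abs_of_nonneg (by positivity : (0:ℝ) ≤ (q n : ℝ))]
    have hb := e_bound h hq hp (n+1)
    have hg := q_grow h hq n
    have hm := q_mono h hq n
    have h0 : (1:ℝ) ≤ (q n : ℝ) := by exact_mod_cast q_one_le h hq n
    have h2 : (0:ℝ) < (q (n+2) : ℝ) := by nlinarith
    have : |(q (n+1) : ℝ) * α - p (n+1)| * (q n : ℝ) ≤ (1 / (q (n+2):ℝ)) * (q n : ℝ) :=
      mul_le_mul_of_nonneg_right hb (by positivity)
    refine le_trans this ?_
    rw [div_mul_eq_mul_div, div_le_iff₀ h2]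
    nlinarith
  have h11 : (-1:ℝ)^n * (-1:ℝ)^n = 1 := by
    rw [← pow_add]; exact Even.neg_one_pow ⟨n, rfl⟩
  have habs := neg_abs_le (((-1:ℝ))^n * (((q (n+1) : ℝ) * α - p (n+1)) * (q n : ℝ)))
  have habs2 : |((-1:ℝ))^n * (((q (n+1) : ℝ) * α - p (n+1)) * (q n : ℝ))|
      ≤ 1/2 := by rw [abs_mul, abs_pow, abs_neg, abs_one, one_pow, one_mul]; exact ht
  calc (1:ℝ)/2 ≤ 1 + ((-1:ℝ))^n * (((q (n+1) : ℝ) * α - p (n+1)) * (q n : ℝ)) := by linarith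
    _ = (-1:ℝ)^n * (((q n : ℝ) * α - p n) * (q (n+1) : ℝ)) := by
        rw [hid, mul_add, h11]

lemma e_lower (n : ℕ) : 1 / (2 * (q (n+1) : ℝ)) ≤ |(q n : ℝ) * α - p n| := by
  have hs := sign_fact h hq hp n
  have hd1 : (0:ℝ) < (q (n+1) : ℝ) := by
    have := q_one_le h hq (n+1); exact_mod_cast Nat.lt_of_lt_of_le Nat.zero_lt_one this
  have habs : (1:ℝ)/2 ≤ |(q n : ℝ) * α - p n| * (q (n+1) : ℝ) := by
    have h2 : ((-1:ℝ)^n * (((q n : ℝ) * α - p n) * (q (n+1) : ℝ)))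
        ≤ |((q n : ℝ) * α - p n)| * (q (n+1) : ℝ) := by
      calc (-1:ℝ)^n * (((q n : ℝ) * α - p n) * (q (n+1) : ℝ))
          ≤ |(-1:ℝ)^n * (((q n : ℝ) * α - p n) * (q (n+1) : ℝ))| := le_abs_self _
        _ = |((q n : ℝ) * α - p n)| * (q (n+1) : ℝ) := by
            rw [abs_mul, abs_pow, abs_neg, abs_one, one_pow, one_mul, abs_mul,
              abs_of_pos hd1]
    linarith
  rw [div_le_iff₀ (by positivity), mul_comm (2 : ℝ), ← mul_assoc]
  linarith

lemma opp_sign (n : ℕ) :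
    ((q n : ℝ) * α - p n) * ((q (n+1) : ℝ) * α - p (n+1)) < 0 := by
  have hs0 := sign_fact h hq hp n
  have hs1 := sign_fact h hq hp (n+1)
  have hd1 : (0:ℝ) < (q (n+1) : ℝ) := by
    have := q_one_le h hq (n+1); exact_mod_cast Nat.lt_of_lt_of_le Nat.zero_lt_one this
  have hd2 : (0:ℝ) < (q (n+2) : ℝ) := by
    have := q_one_le h hq (n+2); exact_mod_cast Nat.lt_of_lt_of_le Nat.zero_lt_one this
  have ha : 0 < (-1:ℝ)^n * ((q n : ℝ) * α - p n) := by
    by_contra hc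
    push_neg at hc
    nlinarith
  have hb : 0 < (-1:ℝ)^(n+1) * ((q (n+1) : ℝ) * α - p (n+1)) := by
    by_contra hc
    push_neg at hc
    nlinarith
  have h11 : (-1:ℝ)^n * (-1:ℝ)^(n+1) = -1 := by
    rw [pow_succ, ← mul_assoc, ← pow_add]
    rw [Even.neg_one_pow (⟨n, rfl⟩ : Even (n+n))]
    ring
  nlinarith [mul_pos ha hb]

omit h hq hp in
lemma abs_le_abs_add {a b : ℝ} (hab : 0 ≤ a * b) : |a| ≤ |a + b| := by
  rw [← Real.sqrt_sq_eq_abs, ← Real.sqrt_sq_eq_abs]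
  apply Real.sqrt_le_sqrt
  nlinarith

lemma best_approx (n : ℕ) (i m : ℤ) (hi0 : 0 < i) (hiq : i < (q (n+1) : ℤ)) :
    |(q n : ℝ) * α - p n| ≤ |(i:ℝ) * α - m| := by
  have hdet := det_int h hq hp n
  set ε : ℤ := (-1)^(n+1) with hε
  have hee : ε * ε = 1 := by
    rw [hε, ← pow_add]; exact Even.neg_one_pow ⟨n+1, rfl⟩
  set x : ℤ := ε * ((q (n+1) : ℤ) * m - p (n+1) * i) with hxd
  set y : ℤ := ε * (p n * i - (q n : ℤ) * m) with hyd
  have hxq : x * (q n : ℤ) + y * (q (n+1) : ℤ) = i := by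
    rw [hxd, hyd]
    linear_combination (ε * i) * hdet + i * hee
  have hxp : x * p n + y * p (n+1) = m := by
    rw [hxd, hyd]
    linear_combination (ε * m) * hdet + m * hee
  have hxqR : (x:ℝ) * (q n : ℝ) + (y:ℝ) * (q (n+1) : ℝ) = (i:ℝ) := by exact_mod_cast congrArg (Int.cast : ℤ → ℝ) hxq
  have hxpR : (x:ℝ) * (p n : ℝ) + (y:ℝ) * (p (n+1) : ℝ) = (m:ℝ) := by exact_mod_cast congrArg (Int.cast : ℤ → ℝ) hxp
  have key : (i:ℝ) * α - m = (x:ℝ) * ((q n : ℝ) * α - p n) + (y:ℝ) * ((q (n+1) : ℝ) * α - p (n+1)) := by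
    linear_combination (-α) * hxqR + hxpR
  have hq0 : (1:ℤ) ≤ (q n : ℤ) := by exact_mod_cast q_one_le h hq n
  have hq1 : (1:ℤ) ≤ (q (n+1) : ℤ) := by exact_mod_cast q_one_le h hq (n+1)
  by_cases hy : y = 0
  · -- i = x * q n, m = x * p n
    have hx0 : x ≠ 0 := by
      intro hx0
      rw [hx0, hy] at hxq
      omega
    have h1x : (1:ℝ) ≤ |(x:ℝ)| := by
      rw [← Int.cast_abs]
      exact_mod_cast Int.one_le_abs hx0
    rw [key, hy]
    push_cast
    rw [zero_mul, add_zero, abs_mul]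
    nlinarith [abs_nonneg ((q n : ℝ) * α - p n)]
  · by_cases hx : x = 0
    · exfalso
      rw [hx, zero_mul, zero_add] at hxq
      rcases le_or_gt y 0 with hy0 | hy0
      · nlinarith
      · nlinarith
    · rcases lt_trichotomy (x * y) 0 with hxy | hxy | hxy
      · -- opposite signs: terms have the same sign
        have hopp := opp_sign h hq hp n
        have hsame : 0 ≤ ((x:ℝ) * ((q n : ℝ) * α - p n)) * ((y:ℝ) * ((q (n+1) : ℝ) * α - p (n+1))) := by
          have hxyR : ((x:ℝ) * (y:ℝ)) < 0 := by exact_mod_cast hxy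
          nlinarith
        have h1x : (1:ℝ) ≤ |(x:ℝ)| := by
          rw [← Int.cast_abs]; exact_mod_cast Int.one_le_abs hx
        rw [key]
        calc |(q n : ℝ) * α - p n| ≤ |(x:ℝ) * ((q n : ℝ) * α - p n)| := by
              rw [abs_mul]; nlinarith [abs_nonneg ((q n : ℝ) * α - p n)]
          _ ≤ _ := abs_le_abs_add hsame
      · exact absurd (mul_eq_zero.1 hxy) (by tauto)
      · -- same sign: contradiction with 0 < i < q (n+1)
        exfalso
        rcases lt_trichotomy x 0 with hx0 | hx0 | hx0
        · have hy0 : y < 0 := by nlinarith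
          nlinarith
        · exact hx hx0
        · have hy0 : 0 < y := by nlinarith
          nlinarith

end
lemma nint_neg (x : ℝ) : nint (-x) = nint x := by
  unfold nint
  rw [abs_sub_round_eq_min, abs_sub_round_eq_min]
  rcases eq_or_ne (Int.fract x) 0 with h | h
  · rw [Int.fract_neg_eq_zero.2 h, h]
  · rw [Int.fract_neg h, sub_sub_cancel, min_comm]

lemma sum_inv_sq' : ∀ n : ℕ, 1 ≤ n → ∑ j ∈ Finset.Icc 1 n, (1:ℝ)/(j:ℝ)^2 ≤ 2 - 1/(n:ℝ) := by
  intro n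
  induction n with
  | zero => omega
  | succ n ih =>
    intro _
    rcases Nat.eq_zero_or_pos n with rfl | hn
    · norm_num
    · have h1 : (0:ℝ) < (n:ℝ) := by exact_mod_cast hn
      rw [Finset.sum_Icc_succ_top (by omega)]
      have hstep : (1:ℝ)/(((n:ℕ)+1:ℕ):ℝ)^2 ≤ 1/(n:ℝ) - 1/((n:ℝ)+1) := by
        push_cast
        rw [div_sub_div _ _ h1.ne' (by positivity : ((n:ℝ)+1) ≠ 0),
          div_le_div_iff₀ (by positivity) (by positivity)]
        nlinarith
      have ihn := ih hn
      push_cast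
      push_cast at hstep ihn
      linarith

lemma sum_inv_sq (n : ℕ) : ∑ j ∈ Finset.Icc 1 n, (1:ℝ)/(j:ℝ)^2 ≤ 2 := by
  rcases Nat.eq_zero_or_pos n with rfl | hn
  · norm_num
  · have := sum_inv_sq' n hn
    have h1 : (0:ℝ) < 1/(n:ℝ) := by
      have : (0:ℝ) < (n:ℝ) := by exact_mod_cast hn
      positivity
    linarith

/-- The weight function for the counting argument. -/
noncomputable def Hc (c : ℤ) : ℝ := if c = 0 then 1 else 1/(c:ℝ)^2

lemma Hc_nonneg (c : ℤ) : 0 ≤ Hc c := by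
  unfold Hc; split <;> positivity

lemma Hc_neg (c : ℤ) : Hc (-c) = Hc c := by
  unfold Hc
  simp only [neg_eq_zero, Int.cast_neg]
  rw [neg_pow]
  norm_num

lemma Hc_sum_bound (Q : ℕ) (hQ : 1 ≤ Q) :
    ∑ c ∈ Finset.Icc (-(Q:ℤ)) (Q:ℤ), Hc c ≤ 5 := by
  have hposN : ∑ c ∈ Finset.Icc (1:ℤ) (Q:ℤ), Hc c
      = ∑ j ∈ Finset.Icc 1 Q, (1:ℝ)/(j:ℝ)^2 := by
    refine Finset.sum_nbij' (fun c => c.toNat) (fun j => (j:ℤ)) ?_ ?_ ?_ ?_ ?_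
    · intro c hc; simp only [Finset.mem_Icc] at *; omega
    · intro j hj; simp only [Finset.mem_Icc] at *; omega
    · intro c hc
      simp only [Finset.mem_Icc] at hc
      show ((c.toNat : ℕ) : ℤ) = c
      omega
    · intro j hj; simp
    · intro c hc
      simp only [Finset.mem_Icc] at hc
      unfold Hc
      rw [if_neg (by omega)]
      have hcast : ((c.toNat : ℕ) : ℝ) = (c : ℝ) := by
        have hcz : ((c.toNat : ℕ) : ℤ) = c := by omega
        exact_mod_cast hcz
      show (1:ℝ)/(c:ℝ)^2 = 1/((c.toNat : ℕ) : ℝ)^2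
      rw [hcast]
  have hpos : ∑ c ∈ Finset.Icc (1:ℤ) (Q:ℤ), Hc c ≤ 2 := by
    rw [hposN]
    exact sum_inv_sq Q
  have hneg : ∑ c ∈ Finset.Icc (-(Q:ℤ)) (-1:ℤ), Hc c
      = ∑ c ∈ Finset.Icc (1:ℤ) (Q:ℤ), Hc c := by
    refine Finset.sum_nbij' (fun c => -c) (fun c => -c) ?_ ?_ ?_ ?_ ?_
    · intro c hc; simp only [Finset.mem_Icc] at *; omega
    · intro c hc; simp only [Finset.mem_Icc] at *; omega
    · intro c _; ring
    · intro c _; ring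
    · intro c _; rw [← Hc_neg c]
  have hsplit : Finset.Icc (-(Q:ℤ)) (Q:ℤ)
      = Finset.Icc (-(Q:ℤ)) (-1:ℤ) ∪ Finset.Icc (0:ℤ) (Q:ℤ) := by
    ext c; simp only [Finset.mem_Icc, Finset.mem_union]; omega
  have hdisj : Disjoint (Finset.Icc (-(Q:ℤ)) (-1:ℤ)) (Finset.Icc (0:ℤ) (Q:ℤ)) := by
    rw [Finset.disjoint_left]; intro c hc hc'
    simp only [Finset.mem_Icc] at *; omega
  have hins : Finset.Icc (0:ℤ) (Q:ℤ) = insert (0:ℤ) (Finset.Icc (1:ℤ) (Q:ℤ)) := by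
    ext c; simp only [Finset.mem_Icc, Finset.mem_insert]; omega
  have h0 : Hc 0 = 1 := by unfold Hc; simp
  rw [hsplit, Finset.sum_union hdisj, hins,
    Finset.sum_insert (by simp), h0, hneg]
  linarith

end CFAux

/-- there is an absolute constant `C > 0` such that for every irrational `α`
with continued fraction convergent denominators `q` and every `k ≥ 2`,
`∑_{0<|q|<q_k} 1/‖qα‖² ≤ C q_k²`. -/
theorem sum_inv_nint_sq_upper_bound :
    ∃ C : ℝ, 0 < C ∧ ∀ (α : ℝ), Irrational α →
      ∀ (q : ℕ → ℕ), (∀ n, (q n : ℝ) = (GenContFract.of α).dens n) →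
      ∀ k : ℕ, 2 ≤ k →
      ∑ i ∈ (Finset.Ioo (-(q k : ℤ)) (q k : ℤ)).erase 0, 1 / nint ((i : ℝ) * α) ^ 2
        ≤ C * (q k : ℝ) ^ 2 := by
  refine ⟨200, by norm_num, ?_⟩
  intro α hirr q hq k hk
  choose p hp using CFAux.num_int hirr
  have hk1 : k - 1 + 1 = k := by omega
  have hQ1 : 1 ≤ q k := CFAux.q_one_le hirr hq k
  have hQR : (0:ℝ) < (q k : ℝ) := by
    have : (0:ℕ) < q k := hQ1
    exact_mod_cast this
  have h2Q : (0:ℝ) < 2*(q k:ℝ) := by positivity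
  have key1 : ∀ i : ℤ, 0 < i → i < (q k : ℤ) →
      1/(2*(q k:ℝ)) ≤ |(i:ℝ)*α - round ((i:ℝ)*α)| := by
    intro i h1 h2
    have hlow := CFAux.e_lower hirr hq hp (k-1)
    have hba := CFAux.best_approx hirr hq hp (k-1) i (round ((i:ℝ)*α)) h1
      (by rw [hk1]; exact h2)
    rw [hk1] at hlow
    exact le_trans hlow hba
  have key2 : ∀ i j : ℤ, 0 < i → i < (q k : ℤ) → 0 < j → j < (q k : ℤ) → i ≠ j →
      1/(2*(q k:ℝ)) ≤ |((i:ℝ)*α - round ((i:ℝ)*α)) - ((j:ℝ)*α - round ((j:ℝ)*α))| := by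
    have main : ∀ i j : ℤ, 0 < j → j < i → i < (q k : ℤ) →
        1/(2*(q k:ℝ)) ≤ |((i:ℝ)*α - round ((i:ℝ)*α)) - ((j:ℝ)*α - round ((j:ℝ)*α))| := by
      intro i j hj0 hji hiQ
      have hba := CFAux.best_approx hirr hq hp (k-1) (i - j)
        (round ((i:ℝ)*α) - round ((j:ℝ)*α)) (by omega) (by rw [hk1]; omega)
      have hlow := CFAux.e_lower hirr hq hp (k-1)
      rw [hk1] at hlow
      refine le_trans (le_trans hlow hba) (le_of_eq ?_)
      congr 1
      push_cast
      ring
    intro i j hi1 hi2 hj1 hj2 hij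
    rcases lt_or_gt_of_ne hij with hlt | hgt
    · rw [abs_sub_comm]
      exact main j i hi1 hlt hj2
    · exact main i j hj1 hgt hi2
  set m : ℤ → ℤ := fun i => ⌈((i:ℝ)*α - round ((i:ℝ)*α)) * (2*(q k:ℝ))⌉ with hm
  have hinj : ∀ i ∈ Finset.Ioo (0:ℤ) (q k : ℤ), ∀ j ∈ Finset.Ioo (0:ℤ) (q k : ℤ),
      m i = m j → i = j := by
    intro i hi j hj hmij
    by_contra hij
    simp only [Finset.mem_Ioo] at hi hj
    have h1 := key2 i j hi.1 hi.2 hj.1 hj.2 hij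
    have hc1 : ((i:ℝ)*α - round ((i:ℝ)*α)) * (2*(q k:ℝ)) ≤ (m i : ℝ) := Int.le_ceil _
    have hc2 : ((j:ℝ)*α - round ((j:ℝ)*α)) * (2*(q k:ℝ)) ≤ (m j : ℝ) := Int.le_ceil _
    have hc3 : (m i : ℝ) < ((i:ℝ)*α - round ((i:ℝ)*α)) * (2*(q k:ℝ)) + 1 :=
      Int.ceil_lt_add_one _
    have hc4 : (m j : ℝ) < ((j:ℝ)*α - round ((j:ℝ)*α)) * (2*(q k:ℝ)) + 1 :=
      Int.ceil_lt_add_one _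
    have hmr : (m i : ℝ) = (m j : ℝ) := by rw [hmij]
    have hsmall : |(((i:ℝ)*α - round ((i:ℝ)*α)) - ((j:ℝ)*α - round ((j:ℝ)*α))) * (2*(q k:ℝ))| < 1 := by
      rw [abs_lt]
      constructor <;> nlinarith
    have hbig : (1:ℝ) ≤ |(((i:ℝ)*α - round ((i:ℝ)*α)) - ((j:ℝ)*α - round ((j:ℝ)*α))) * (2*(q k:ℝ))| := by
      rw [abs_mul, abs_of_pos h2Q]
      calc (1:ℝ) = (1/(2*(q k:ℝ))) * (2*(q k:ℝ)) := by field_simp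
        _ ≤ _ := mul_le_mul_of_nonneg_right h1 h2Q.le
    linarith
  have hrange : ∀ i ∈ Finset.Ioo (0:ℤ) (q k : ℤ), m i ∈ Finset.Icc (-(q k : ℤ)) (q k : ℤ) := by
    intro i _
    have habs : |(i:ℝ)*α - round ((i:ℝ)*α)| ≤ 1/2 := abs_sub_round _
    have ht1 : ((i:ℝ)*α - round ((i:ℝ)*α)) * (2*(q k:ℝ)) ≤ (q k:ℝ) := by
      nlinarith [le_abs_self ((i:ℝ)*α - round ((i:ℝ)*α))]
    have ht2 : -(q k:ℝ) ≤ ((i:ℝ)*α - round ((i:ℝ)*α)) * (2*(q k:ℝ)) := by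
      nlinarith [neg_abs_le ((i:ℝ)*α - round ((i:ℝ)*α))]
    simp only [Finset.mem_Icc]
    constructor
    · have hle : ((-(q k : ℤ) : ℤ) : ℝ) ≤ (m i : ℝ) :=
        le_trans (by push_cast; linarith) (Int.le_ceil _)
      exact_mod_cast hle
    · exact Int.ceil_le.2 (by push_cast; linarith)
  have hpt : ∀ i ∈ Finset.Ioo (0:ℤ) (q k : ℤ),
      1 / nint ((i:ℝ)*α)^2 ≤ 16*(q k:ℝ)^2 * CFAux.Hc (m i) := by
    intro i hi
    simp only [Finset.mem_Ioo] at hi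
    have hδ := key1 i hi.1 hi.2
    have hnint : nint ((i:ℝ)*α) = |(i:ℝ)*α - round ((i:ℝ)*α)| := rfl
    have htpos : (0:ℝ) < |(i:ℝ)*α - round ((i:ℝ)*α)| := lt_of_lt_of_le (by positivity) hδ
    have hc1 : ((i:ℝ)*α - round ((i:ℝ)*α)) * (2*(q k:ℝ)) ≤ (m i : ℝ) := Int.le_ceil _
    have hc3 : (m i : ℝ) < ((i:ℝ)*α - round ((i:ℝ)*α)) * (2*(q k:ℝ)) + 1 :=
      Int.ceil_lt_add_one _
    by_cases hsm : m i = -1 ∨ m i = 0 ∨ m i = 1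
    · have hHc : CFAux.Hc (m i) = 1 := by
        rcases hsm with h' | h' | h' <;> rw [h'] <;> unfold CFAux.Hc <;> norm_num
      rw [hHc, hnint, mul_one, div_le_iff₀ (by positivity)]
      have h1t : 1 ≤ |(i:ℝ)*α - round ((i:ℝ)*α)| * (2*(q k:ℝ)) := by
        rw [div_le_iff₀ h2Q] at hδ
        linarith
      nlinarith [h1t, mul_le_mul h1t h1t (by norm_num) (by positivity)]
    · push_neg at hsm
      obtain ⟨hs1, hs2, hs3⟩ := hsm
      have hHc : CFAux.Hc (m i) = 1/((m i : ℤ):ℝ)^2 := by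
        unfold CFAux.Hc; rw [if_neg hs2]
      rw [hHc, hnint]
      have hcsq : (0:ℝ) < ((m i : ℤ):ℝ)^2 := by
        have : ((m i : ℤ):ℝ) ≠ 0 := by exact_mod_cast hs2
        positivity
      have hkey : ((m i : ℤ):ℝ)^2 ≤ 16*(q k:ℝ)^2 * ((i:ℝ)*α - round ((i:ℝ)*α))^2 := by
        rcases le_or_gt 2 (m i) with hc | hc
        · have hcR : (2:ℝ) ≤ (m i : ℝ) := by exact_mod_cast hc
          have h4 : ((m i : ℤ):ℝ) ≤ 4*(q k:ℝ)*((i:ℝ)*α - round ((i:ℝ)*α)) := by nlinarith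
          nlinarith
        · have hc' : m i ≤ -2 := by omega
          have hcR : (m i : ℝ) ≤ -2 := by exact_mod_cast hc'
          have h4 : -((m i : ℤ):ℝ) ≤ 4*(q k:ℝ)*(-((i:ℝ)*α - round ((i:ℝ)*α))) := by nlinarith
          nlinarith
      rw [show 16*(q k:ℝ)^2 * (1/((m i : ℤ):ℝ)^2) = (16*(q k:ℝ)^2)/((m i : ℤ):ℝ)^2 by ring,
        div_le_div_iff₀ (by positivity) hcsq, one_mul, sq_abs]
      exact hkey
  have hsum_pos : ∑ i ∈ Finset.Ioo (0:ℤ) (q k : ℤ), 1 / nint ((i:ℝ)*α)^2 ≤ 80*(q k:ℝ)^2 := by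
    calc ∑ i ∈ Finset.Ioo (0:ℤ) (q k : ℤ), 1 / nint ((i:ℝ)*α)^2
        ≤ ∑ i ∈ Finset.Ioo (0:ℤ) (q k : ℤ), 16*(q k:ℝ)^2 * CFAux.Hc (m i) :=
          Finset.sum_le_sum hpt
      _ = 16*(q k:ℝ)^2 * ∑ i ∈ Finset.Ioo (0:ℤ) (q k : ℤ), CFAux.Hc (m i) := by
          rw [Finset.mul_sum]
      _ = 16*(q k:ℝ)^2 * ∑ c ∈ (Finset.Ioo (0:ℤ) (q k : ℤ)).image m, CFAux.Hc c := by
          rw [Finset.sum_image hinj]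
      _ ≤ 16*(q k:ℝ)^2 * ∑ c ∈ Finset.Icc (-(q k : ℤ)) (q k : ℤ), CFAux.Hc c := by
          apply mul_le_mul_of_nonneg_left _ (by positivity)
          apply Finset.sum_le_sum_of_subset_of_nonneg
          · intro c hc
            obtain ⟨i, hi, rfl⟩ := Finset.mem_image.1 hc
            exact hrange i hi
          · intro c _ _
            exact CFAux.Hc_nonneg c
      _ ≤ 16*(q k:ℝ)^2 * 5 := by
          apply mul_le_mul_of_nonneg_left (CFAux.Hc_sum_bound (q k) hQ1) (by positivity)
      _ = 80*(q k:ℝ)^2 := by ring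
  have hT : (Finset.Ioo (-(q k : ℤ)) (q k : ℤ)).erase 0
      = Finset.Ioo (-(q k : ℤ)) (0:ℤ) ∪ Finset.Ioo (0:ℤ) (q k : ℤ) := by
    ext c
    simp only [Finset.mem_erase, Finset.mem_Ioo, Finset.mem_union]
    omega
  have hdisj : Disjoint (Finset.Ioo (-(q k : ℤ)) (0:ℤ)) (Finset.Ioo (0:ℤ) (q k : ℤ)) := by
    rw [Finset.disjoint_left]
    intro c hc hc'
    simp only [Finset.mem_Ioo] at hc hc'
    omega
  have hneg : ∑ i ∈ Finset.Ioo (-(q k : ℤ)) (0:ℤ), 1 / nint ((i:ℝ)*α)^2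
      = ∑ i ∈ Finset.Ioo (0:ℤ) (q k : ℤ), 1 / nint ((i:ℝ)*α)^2 := by
    refine Finset.sum_nbij' (fun i => -i) (fun i => -i) ?_ ?_ ?_ ?_ ?_
    · intro i hi; simp only [Finset.mem_Ioo] at *; omega
    · intro i hi; simp only [Finset.mem_Ioo] at *; omega
    · intro i _; ring
    · intro i _; ring
    · intro i _
      show 1 / nint ((i:ℝ)*α)^2 = 1 / nint ((((-i : ℤ)):ℝ)*α)^2
      rw [show ((((-i : ℤ)):ℝ)*α) = -((i:ℝ)*α) by push_cast; ring, CFAux.nint_neg]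
  rw [hT, Finset.sum_union hdisj, hneg]
  nlinarith [hsum_pos, sq_nonneg (q k : ℝ)]
end

section
/- Denjoy–Koksma inequality: Let α be irrational with continued fraction convergent denominators q_n, and let f: ℝ/ℤ → ℝ be a function of bounded variation Var(f). Then for every n ≥ 0 and every x ∈ ℝ/ℤ, |∑_{j=0}^{q_n−1} f(x + jα) − q_n ∫_{ℝ/ℤ} f(z) dz| ≤ Var(f). -/
open Set MeasureTheory intervalIntegral GenContFract ENNReal NNReal


open Set MeasureTheory intervalIntegral

private lemma dk_evar_shift (f : ℝ → ℝ) (c u v : ℝ) :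
    eVariationOn (fun t => f (t + c)) (Set.Icc u v) = eVariationOn f (Set.Icc (u + c) (v + c)) := by
  have h := eVariationOn.comp_eq_of_monotoneOn f (fun t : ℝ => t + c)
    ((monotone_id.add_const c).monotoneOn (Set.Icc u v))
  rw [show (f ∘ fun t : ℝ => t + c) = (fun t => f (t + c)) from rfl] at h
  rw [h]
  congr 1
  exact Set.image_add_const_Icc c u v

private lemma dk_evar_int_shift {f : ℝ → ℝ} (hper : Function.Periodic f 1) (e : ℤ) (u v : ℝ) :
    eVariationOn f (Set.Icc (u + e) (v + e)) = eVariationOn f (Set.Icc u v) := by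
  rw [← dk_evar_shift f e u v]
  congr 1
  funext t
  simpa using (hper.int_mul e) t

private lemma dk_evar_period {f : ℝ → ℝ} (hper : Function.Periodic f 1) (a : ℝ) :
    eVariationOn f (Set.Icc a (a + 1)) = eVariationOn f (Set.Icc 0 1) := by
  set k : ℤ := ⌈a⌉ with hk
  have h1 : a ≤ (k : ℝ) := Int.le_ceil a
  have h2 : (k : ℝ) ≤ a + 1 := by
    have := Int.ceil_le_floor_add_one a
    have := Int.floor_le a
    push_cast at *
    linarith [Int.ceil_lt_add_one a]
  have hsplit := eVariationOn.Icc_add_Icc f (s := Set.univ) h1 h2 (Set.mem_univ _)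
  simp only [Set.univ_inter] at hsplit
  have e1 : eVariationOn f (Set.Icc a (k : ℝ)) = eVariationOn f (Set.Icc (a + 1 - k) 1) := by
    have := dk_evar_int_shift hper (k - 1) (a + 1 - k) 1
    rw [← this]; congr 1 <;> push_cast <;> ring
  have e2 : eVariationOn f (Set.Icc (k : ℝ) (a + 1)) = eVariationOn f (Set.Icc 0 (a + 1 - k)) := by
    have := dk_evar_int_shift hper k 0 (a + 1 - k)
    rw [← this]; congr 1 <;> push_cast <;> ring
  have hsplit2 := eVariationOn.Icc_add_Icc f (s := Set.univ) (a := (0:ℝ)) (b := a + 1 - k) (c := 1)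
    (by linarith) (by linarith) (Set.mem_univ _)
  simp only [Set.univ_inter] at hsplit2
  rw [← hsplit, e1, e2, add_comm, hsplit2]

private lemma dk_evar_sum (f : ℝ → ℝ) (m : ℕ → ℝ) (hm : ∀ k, m k ≤ m (k + 1)) (N : ℕ) :
    ∑ k ∈ Finset.range N, eVariationOn f (Set.Icc (m k) (m (k + 1)))
      = eVariationOn f (Set.Icc (m 0) (m N)) := by
  induction N with
  | zero =>
      simp only [Finset.range_zero, Finset.sum_empty]
      exact (eVariationOn.subsingleton f (by rw [Set.Icc_self]; exact Set.subsingleton_singleton)).symm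
  | succ N ih =>
      have hmono : Monotone m := monotone_nat_of_le_succ hm
      have h := eVariationOn.Icc_add_Icc f (s := Set.univ) (hmono (Nat.zero_le N)) (hm N)
        (Set.mem_univ _)
      simp only [Set.univ_inter] at h
      rw [Finset.sum_range_succ, ih, h]

private lemma dk_bv_integrable (f : ℝ → ℝ) {u v : ℝ} (huv : u ≤ v)
    (h : BoundedVariationOn f (Set.Icc u v)) : IntervalIntegrable f volume u v := by
  obtain ⟨p, q, hp, hq, rfl⟩ := h.locallyBoundedVariationOn.exists_monotoneOn_sub_monotoneOn
  have huIcc : Set.uIcc u v = Set.Icc u v := Set.uIcc_of_le huv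
  exact ((huIcc ▸ hp).intervalIntegrable).sub ((huIcc ▸ hq).intervalIntegrable)

open GenContFract

private lemma dk_not_term {α : ℝ} (hα : Irrational α) (m : ℕ) :
    ¬(GenContFract.of α).TerminatedAt m := by
  intro h
  have hterm : (GenContFract.of α).Terminates := ⟨m, h⟩
  obtain ⟨r, hr⟩ := (GenContFract.terminates_iff_rat α).1 hterm
  exact hα ⟨r, hr.symm⟩

private lemma dk_nums_int {α : ℝ} (hα : Irrational α) :
    ∀ m : ℕ, ∃ p : ℤ, (p : ℝ) = (GenContFract.of α).nums m := by
  have key : ∀ m : ℕ, (∃ p : ℤ, (p : ℝ) = (GenContFract.of α).nums m) ∧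
      (∃ p : ℤ, (p : ℝ) = (GenContFract.of α).nums (m + 1)) := by
    intro m
    induction m with
    | zero =>
        constructor
        · exact ⟨⌊α⌋, by rw [GenContFract.zeroth_num_eq_h, GenContFract.of_h_eq_floor]⟩
        · obtain ⟨gp, hgp⟩ := Option.ne_none_iff_exists'.1 (dk_not_term hα 0)
          obtain ⟨ha, z, hz⟩ := GenContFract.of_partNum_eq_one_and_exists_int_partDen_eq hgp
          refine ⟨z * ⌊α⌋ + 1, ?_⟩
          rw [GenContFract.first_num_eq hgp, ha, hz, GenContFract.of_h_eq_floor]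
          push_cast; ring
    | succ m ih =>
        obtain ⟨⟨p0, h0⟩, ⟨p1, h1⟩⟩ := ih
        refine ⟨⟨p1, h1⟩, ?_⟩
        obtain ⟨gp, hgp⟩ := Option.ne_none_iff_exists'.1 (dk_not_term hα (m + 1))
        obtain ⟨ha, z, hz⟩ := GenContFract.of_partNum_eq_one_and_exists_int_partDen_eq hgp
        refine ⟨z * p1 + p0, ?_⟩
        rw [GenContFract.nums_recurrence hgp h0.symm h1.symm, ha, hz]
        push_cast; ring
  exact fun m => (key m).1

private lemma dk_det {α : ℝ} (hα : Irrational α) (n : ℕ) :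
    (GenContFract.of α).nums n * (GenContFract.of α).dens (n + 1) -
      (GenContFract.of α).dens n * (GenContFract.of α).nums (n + 1) = (-1) ^ (n + 1) := by
  exact SimpContFract.determinant (s := SimpContFract.of α) (dk_not_term hα n)

private lemma dk_dens_ge_one {α : ℝ} (hα : Irrational α) (n : ℕ) :
    (1 : ℝ) ≤ (GenContFract.of α).dens n := by
  have h := GenContFract.succ_nth_fib_le_of_nth_den (v := α) (n := n) (Or.inr (dk_not_term hα _))
  refine le_trans ?_ h
  exact_mod_cast Nat.one_le_iff_ne_zero.2 (Nat.fib_pos.2 n.succ_pos).ne'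


set_option maxHeartbeats 2000000 in
/-- Denjoy–Koksma inequality: for an irrational `α` with convergent
denominators `q`, a `1`-periodic function `f : ℝ → ℝ` of bounded variation on a period,
every `n` and every `x`,
`|∑_{j=0}^{q_n−1} f(x + jα) − q_n ∫₀¹ f| ≤ Var(f)`. -/
theorem denjoy_koksma
    (α : ℝ) (hα : Irrational α)
    (q : ℕ → ℕ) (hq : ∀ n, (q n : ℝ) = (GenContFract.of α).dens n)
    (f : ℝ → ℝ) (hper : Function.Periodic f 1)
    (hBV : BoundedVariationOn f (Set.Icc 0 1)) :
    ∀ (n : ℕ) (x : ℝ),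
      |∑ j ∈ Finset.range (q n), f (x + j * α) - (q n : ℝ) * ∫ z in (0:ℝ)..1, f z|
        ≤ (eVariationOn f (Set.Icc 0 1)).toReal := by
  intro n x
  obtain ⟨P, hP⟩ := dk_nums_int hα n
  obtain ⟨P1, hP1⟩ := dk_nums_int hα (n + 1)
  set Q : ℕ := q n with hQdef
  have hQr : (Q : ℝ) = (GenContFract.of α).dens n := hq n
  have hQ1r : (q (n + 1) : ℝ) = (GenContFract.of α).dens (n + 1) := hq (n + 1)
  have hQge1 : (1 : ℝ) ≤ (Q : ℝ) := hQr ▸ dk_dens_ge_one hα n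
  have hQpos : (0 : ℝ) < (Q : ℝ) := lt_of_lt_of_le one_pos hQge1
  have hQnat : 1 ≤ Q := by exact_mod_cast hQge1
  have hmono : (Q : ℝ) ≤ (q (n + 1) : ℝ) := by rw [hQr, hQ1r]; exact GenContFract.of_den_mono
  -- determinant and coprimality
  have hdetR : (P : ℝ) * (q (n + 1) : ℝ) - (Q : ℝ) * (P1 : ℝ) = (-1) ^ (n + 1) := by
    rw [hP, hP1, hQr, hQ1r]; exact dk_det hα n
  have hdetZ : P * (q (n + 1) : ℤ) - (Q : ℤ) * P1 = (-1) ^ (n + 1) := by exact_mod_cast hdetR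
  have hcop : IsCoprime (P : ℤ) ((Q : ℤ)) := by
    refine ⟨(-1) ^ (n + 1) * (q (n + 1) : ℤ), -((-1 : ℤ) ^ (n + 1) * P1), ?_⟩
    have he : ((-1 : ℤ) ^ (n + 1)) * ((-1 : ℤ) ^ (n + 1)) = 1 := by
      rw [← pow_add]
      exact Even.neg_one_pow ⟨n + 1, by ring⟩
    linear_combination ((-1 : ℤ) ^ (n + 1)) * hdetZ + he
  -- the approximation error
  set δ : ℝ := α - (P : ℝ) / (Q : ℝ) with hδdef
  have hδ : |δ| ≤ 1 / ((Q : ℝ) * (q (n + 1) : ℝ)) := by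
    have h := GenContFract.abs_sub_convs_le (v := α) (n := n) (dk_not_term hα n)
    rw [GenContFract.conv_eq_num_div_den, ← hP, ← hQr, ← hQ1r] at h
    exact h
  have hjδ : ∀ j : ℕ, j < Q → |(j : ℝ) * δ| ≤ 1 / (Q : ℝ) := by
    intro j hj
    have hjle : (j : ℝ) ≤ (Q : ℝ) - 1 := by
      have : (j : ℝ) + 1 ≤ (Q : ℝ) := by exact_mod_cast Nat.succ_le_of_lt hj
      linarith
    rw [abs_mul, abs_of_nonneg (Nat.cast_nonneg j)]
    have hq1pos : (0 : ℝ) < (q (n + 1) : ℝ) := lt_of_lt_of_le hQpos hmono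
    calc (j : ℝ) * |δ| ≤ ((Q : ℝ) - 1) * (1 / ((Q : ℝ) * (q (n + 1) : ℝ))) :=
          mul_le_mul hjle hδ (abs_nonneg δ) (by linarith)
      _ ≤ 1 / (Q : ℝ) := by
          rw [mul_one_div, div_le_div_iff₀ (by positivity) hQpos]
          nlinarith
  -- the grid
  set c : ℝ := (if 0 ≤ δ then (0:ℝ) else -(1 / (Q : ℝ))) with hcdef
  set a : ℝ := x + c with hadef
  set m : ℕ → ℝ := fun k => a + (k : ℝ) / (Q : ℝ) with hmdef
  have hmle : ∀ k, m k ≤ m (k + 1) := by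
    intro k
    simp only [hmdef]
    have h1 : ((k : ℕ) : ℝ) ≤ (((k + 1) : ℕ) : ℝ) := by push_cast; linarith
    gcongr
  have hmmono : Monotone m := monotone_nat_of_le_succ hmle
  have hm0 : m 0 = a := by simp [hmdef]
  have hmQ : m Q = a + 1 := by
    simp only [hmdef]
    rw [div_self (ne_of_gt hQpos)]
  set V : ℕ → ℝ≥0∞ := fun k => eVariationOn f (Set.Icc (m k) (m (k + 1))) with hVdef
  have hVtot : ∑ k ∈ Finset.range Q, V k = eVariationOn f (Set.Icc a (a + 1)) := by
    rw [show (Set.Icc a (a+1)) = Set.Icc (m 0) (m Q) by rw [hm0, hmQ]]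
    exact dk_evar_sum f m hmle Q
  have hVper : eVariationOn f (Set.Icc a (a + 1)) = eVariationOn f (Set.Icc 0 1) :=
    dk_evar_period hper a
  have htotne : ∑ k ∈ Finset.range Q, V k ≠ ⊤ := by rw [hVtot, hVper]; exact hBV
  have hVfin : ∀ k ∈ Finset.range Q, V k ≠ ⊤ := by
    intro k hk
    exact ne_top_of_le_ne_top htotne (Finset.single_le_sum (f := V) (fun i _ => zero_le) hk)
  have hBVa : BoundedVariationOn f (Set.Icc a (a + 1)) := by
    show eVariationOn f _ ≠ ⊤
    rw [hVper]; exact hBV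
  have hIccsub : ∀ k, k < Q → Set.Icc (m k) (m (k + 1)) ⊆ Set.Icc a (a + 1) := by
    intro k hk
    apply Set.Icc_subset_Icc
    · rw [← hm0]; exact hmmono (Nat.zero_le k)
    · rw [← hmQ]; exact hmmono (Nat.succ_le_of_lt hk)
  have hint : ∀ k, k < Q → IntervalIntegrable f volume (m k) (m (k + 1)) := fun k hk =>
    dk_bv_integrable f (hmle k) (hBVa.mono (hIccsub k hk))
  -- the permutation
  set σ : ℕ → ℕ := fun j => (((j : ℤ) * P) % (Q : ℤ)).toNat with hσdef
  have hQZpos : (0 : ℤ) < (Q : ℤ) := by exact_mod_cast hQnat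
  have hσmod : ∀ j : ℕ, ((σ j : ℤ)) = ((j : ℤ) * P) % (Q : ℤ) := fun j =>
    Int.toNat_of_nonneg (Int.emod_nonneg _ (ne_of_gt hQZpos))
  have hσlt : ∀ j, σ j < Q := by
    intro j
    have h1 := Int.emod_lt_of_pos ((j : ℤ) * P) hQZpos
    have h2 := hσmod j
    omega
  have hσinj : ∀ j1 ∈ Finset.range Q, ∀ j2 ∈ Finset.range Q, σ j1 = σ j2 → j1 = j2 := by
    intro j1 h1 j2 h2 heq
    rw [Finset.mem_range] at h1 h2
    have hmodeq : ((j1 : ℤ) * P) % (Q : ℤ) = ((j2 : ℤ) * P) % (Q : ℤ) := by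
      rw [← hσmod, ← hσmod, heq]
    have hdvd : (Q : ℤ) ∣ ((j2 : ℤ) - (j1 : ℤ)) * P := by
      have h3 : (Q : ℤ) ∣ (j2 : ℤ) * P - (j1 : ℤ) * P := (Int.ModEq.dvd (hmodeq : Int.ModEq _ _ _))
      have : ((j2 : ℤ) - (j1 : ℤ)) * P = (j2 : ℤ) * P - (j1 : ℤ) * P := by ring
      rwa [this]
    have hdvd2 : (Q : ℤ) ∣ ((j2 : ℤ) - (j1 : ℤ)) := hcop.symm.dvd_of_dvd_mul_right hdvd
    rcases eq_or_ne ((j2 : ℤ) - (j1 : ℤ)) 0 with h | h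
    · omega
    · have hge := Int.le_of_dvd (abs_pos.2 h) ((dvd_abs _ _).2 hdvd2)
      have habs : |(j2 : ℤ) - (j1 : ℤ)| < (Q : ℤ) := abs_lt.2 ⟨by omega, by omega⟩
      omega
  have himg : Finset.image σ (Finset.range Q) = Finset.range Q := by
    apply Finset.eq_of_subset_of_card_le
    · intro k hk
      rw [Finset.mem_image] at hk
      obtain ⟨j, _, rfl⟩ := hk
      exact Finset.mem_range.2 (hσlt j)
    · rw [Finset.card_image_of_injOn (fun a ha b hb => hσinj a ha b hb)]
  have hsum : ∀ G : ℕ → ℝ, ∑ j ∈ Finset.range Q, G (σ j) = ∑ k ∈ Finset.range Q, G k := by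
    intro G
    have h := Finset.sum_image (g := σ) (f := G) (s := Finset.range Q) hσinj
    rw [himg] at h
    exact h.symm
  -- per-interval estimate
  have est : ∀ k, k < Q → ∀ y ∈ Set.Icc (m k) (m (k + 1)),
      |f y - (Q : ℝ) * ∫ t in (m k)..(m (k + 1)), f t| ≤ (V k).toReal := by
    intro k hk y hy
    have hlen : m (k + 1) - m k = 1 / (Q : ℝ) := by
      simp only [hmdef]; push_cast; field_simp; ring
    have hii := hint k hk
    have hVk : V k ≠ ⊤ := hVfin k (Finset.mem_range.2 hk)
    have hptb : ∀ t ∈ Set.uIoc (m k) (m (k + 1)), ‖f y - f t‖ ≤ (V k).toReal := by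
      intro t ht
      rw [Set.uIoc_of_le (hmle k)] at ht
      have ht' : t ∈ Set.Icc (m k) (m (k + 1)) := Set.Ioc_subset_Icc_self ht
      have h1 : edist (f y) (f t) ≤ V k := eVariationOn.edist_le f hy ht'
      have h2 := ENNReal.toReal_mono hVk h1
      rw [Real.norm_eq_abs, ← Real.dist_eq, dist_edist]
      exact h2
    have hib := intervalIntegral.norm_integral_le_of_norm_le_const hptb
    have hsubint : ∫ t in (m k)..(m (k + 1)), (f y - f t)
        = f y * (1 / (Q : ℝ)) - ∫ t in (m k)..(m (k + 1)), f t := by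
      rw [intervalIntegral.integral_sub intervalIntegrable_const hii,
        intervalIntegral.integral_const, hlen, smul_eq_mul]
      ring
    have habs : |f y - (Q : ℝ) * ∫ t in (m k)..(m (k + 1)), f t|
        = (Q : ℝ) * |f y * (1 / (Q : ℝ)) - ∫ t in (m k)..(m (k + 1)), f t| := by
      rw [← abs_of_pos hQpos, ← abs_mul]
      congr 1
      field_simp
      rw [abs_of_pos hQpos]; ring
    rw [habs, ← hsubint]
    calc (Q : ℝ) * |∫ t in (m k)..(m (k + 1)), (f y - f t)|
        ≤ (Q : ℝ) * ((V k).toReal * |m (k + 1) - m k|) := by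
          apply mul_le_mul_of_nonneg_left _ (le_of_lt hQpos)
          rw [← Real.norm_eq_abs]
          exact hib
      _ = (V k).toReal := by
          rw [hlen, abs_of_pos (by positivity)]
          field_simp
  -- orbit points
  have hy : ∀ j, j < Q → f (x + (j : ℝ) * α) = f (m (σ j) + ((j : ℝ) * δ - c)) ∧
      m (σ j) + ((j : ℝ) * δ - c) ∈ Set.Icc (m (σ j)) (m (σ j + 1)) := by
    intro j hj
    have hjP := Int.mul_ediv_add_emod ((j : ℤ) * P) (Q : ℤ)
    set e : ℤ := ((j : ℤ) * P) / (Q : ℤ) with hedef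
    have hZ : ((j : ℤ) * P) = (Q : ℤ) * e + (σ j : ℤ) := by rw [hσmod]; omega
    have hcast : (j : ℝ) * (P : ℝ) = (Q : ℝ) * (e : ℝ) + (σ j : ℝ) := by exact_mod_cast hZ
    have hPQ : (j : ℝ) * ((P : ℝ) / (Q : ℝ)) = (σ j : ℝ) / (Q : ℝ) + (e : ℝ) := by
      field_simp
      linear_combination hcast
    have hδα : α = (P : ℝ) / (Q : ℝ) + δ := by rw [hδdef]; ring
    have hxy : x + (j : ℝ) * α = (m (σ j) + ((j : ℝ) * δ - c)) + (e : ℝ) * 1 := by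
      simp only [hmdef, hadef]
      rw [hδα, mul_add, hPQ]
      ring
    have hfeq : f (x + (j : ℝ) * α) = f (m (σ j) + ((j : ℝ) * δ - c)) := by
      rw [hxy]
      exact (hper.int_mul e) _
    have hm1 : m (σ j + 1) = m (σ j) + 1 / (Q : ℝ) := by
      simp only [hmdef]; push_cast; field_simp; ring
    have hb := hjδ j hj
    refine ⟨hfeq, ?_⟩
    rw [hm1]
    by_cases hsign : 0 ≤ δ
    · have hc0 : c = 0 := if_pos hsign
      have h1 : 0 ≤ (j : ℝ) * δ := mul_nonneg (Nat.cast_nonneg j) hsign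
      have h2 : (j : ℝ) * δ ≤ 1 / (Q : ℝ) := le_trans (le_abs_self _) hb
      constructor <;> rw [hc0] <;> linarith
    · have hc0 : c = -(1 / (Q : ℝ)) := if_neg hsign
      have hδneg : δ ≤ 0 := le_of_not_ge hsign
      have h1 : (j : ℝ) * δ ≤ 0 := mul_nonpos_of_nonneg_of_nonpos (Nat.cast_nonneg j) hδneg
      have h2 := abs_le.1 hb
      clear_value δ c a m V σ e Q
      constructor <;> rw [hc0] <;> [linarith [h2.1]; linarith [h1]]
  -- total of the interval integrals
  have hGsum : ∑ j ∈ Finset.range Q, (Q : ℝ) * ∫ t in (m (σ j))..(m (σ j + 1)), f t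
      = (Q : ℝ) * ∫ z in (0:ℝ)..1, f z := by
    rw [hsum (fun k => (Q : ℝ) * ∫ t in (m k)..(m (k + 1)), f t)]
    rw [← Finset.mul_sum, intervalIntegral.sum_integral_adjacent_intervals hint]
    rw [hm0, hmQ]
    congr 1
    have h := hper.intervalIntegral_add_eq a 0
    simpa using h
  -- assemble
  calc |∑ j ∈ Finset.range Q, f (x + (j : ℝ) * α) - (Q : ℝ) * ∫ z in (0:ℝ)..1, f z|
      = |∑ j ∈ Finset.range Q,
          (f (x + (j : ℝ) * α) - (Q : ℝ) * ∫ t in (m (σ j))..(m (σ j + 1)), f t)| := by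
        rw [Finset.sum_sub_distrib, hGsum]
    _ ≤ ∑ j ∈ Finset.range Q,
          |f (x + (j : ℝ) * α) - (Q : ℝ) * ∫ t in (m (σ j))..(m (σ j + 1)), f t| :=
        Finset.abs_sum_le_sum_abs _ _
    _ ≤ ∑ j ∈ Finset.range Q, (V (σ j)).toReal := by
        apply Finset.sum_le_sum
        intro j hj
        rw [Finset.mem_range] at hj
        obtain ⟨hfeq, hmem⟩ := hy j hj
        rw [hfeq]
        exact est (σ j) (hσlt j) _ hmem
    _ = ∑ k ∈ Finset.range Q, (V k).toReal := hsum (fun k => (V k).toReal)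
    _ = (∑ k ∈ Finset.range Q, V k).toReal := (ENNReal.toReal_sum hVfin).symm
    _ = (eVariationOn f (Set.Icc 0 1)).toReal := by rw [hVtot, hVper]
end

section
/- Let α be irrational with convergent denominators q_n. If q_{n+1} < q_n² for all sufficiently large n, then for all sufficiently large n there exists an index k with 0 < k < n such that q_n^{1/4} ≤ q_k ≤ q_n^{1/2}. -/
/-- if `α` is irrational with convergent denominators `q_n` and
`q_{n+1} < q_n²` for all sufficiently large `n`, then for all sufficiently large `n`
there is `0 < k < n` with `q_n^{1/4} ≤ q_k ≤ q_n^{1/2}`. -/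
theorem exists_intermediate_denominator
    (α : ℝ) (hα : Irrational α)
    (q : ℕ → ℕ) (hq : ∀ n, (q n : ℝ) = (GenContFract.of α).dens n)
    (h : ∃ N : ℕ, ∀ n ≥ N, q (n + 1) < q n ^ 2) :
    ∃ M : ℕ, ∀ n ≥ M, ∃ k : ℕ, 0 < k ∧ k < n ∧
      (q n : ℝ) ^ ((1:ℝ)/4) ≤ (q k : ℝ) ∧ (q k : ℝ) ≤ (q n : ℝ) ^ ((1:ℝ)/2) := by
  obtain ⟨N₀, hN₀⟩ := h
  -- the continued fraction of an irrational number does not terminate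
  have hterm : ¬(GenContFract.of α).Terminates := by
    rw [GenContFract.terminates_iff_rat]
    rintro ⟨r, hr⟩
    exact hα ⟨r, hr.symm⟩
  -- hence `fib (n+1) ≤ q n`
  have hfib : ∀ n, Nat.fib (n + 1) ≤ q n := by
    intro n
    have : (Nat.fib (n + 1) : ℝ) ≤ (GenContFract.of α).dens n :=
      GenContFract.succ_nth_fib_le_of_nth_den (Or.inr fun ht => hterm ⟨_, ht⟩)
    rw [← hq n] at this
    exact_mod_cast this
  have hpos : ∀ n, 1 ≤ q n := fun n =>
    le_trans (Nat.fib_pos.mpr (Nat.succ_pos n)) (hfib n)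
  set N : ℕ := max N₀ 1 with hN
  refine ⟨max (q N ^ 2 + 5) (N + 2), fun n hn => ?_⟩
  have hnN : N + 2 ≤ n := le_trans (le_max_right _ _) hn
  have hn5 : q N ^ 2 + 5 ≤ n := le_trans (le_max_left _ _) hn
  -- q n is large: q N ^ 2 ≤ q n
  have hqn_large : q N ^ 2 ≤ q n := by
    calc q N ^ 2 ≤ n + 1 := by omega
    _ ≤ Nat.fib (n + 1) := Nat.le_fib_self (by omega)
    _ ≤ q n := hfib n
  -- define k as the greatest index ≤ n - 1 with q k ^ 2 ≤ q n
  set P : ℕ → Prop := fun k => q k ^ 2 ≤ q n with hP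
  have hPN : P N := hqn_large
  have hNle : N ≤ n - 1 := by omega
  set k : ℕ := Nat.findGreatest P (n - 1) with hk
  have hPk : P k := Nat.findGreatest_spec hNle hPN
  have hkN : N ≤ k := Nat.le_findGreatest hNle hPN
  have hkn1 : k ≤ n - 1 := Nat.findGreatest_le _
  -- k ≠ n - 1 since q n < q (n-1) ^ 2
  have hkne : k < n - 1 := by
    rcases lt_or_eq_of_le hkn1 with h' | h'
    · exact h'
    · exfalso
      have h1 : q n < q (n - 1) ^ 2 := by
        have := hN₀ (n - 1) (by omega)
        have hrw : n - 1 + 1 = n := by omega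
        rwa [hrw] at this
      have h2 : q (n - 1) ^ 2 ≤ q n := h' ▸ hPk
      omega
  -- maximality: q n < q (k+1) ^ 2
  have hnotP : ¬ P (k + 1) :=
    Nat.findGreatest_is_greatest (Nat.lt_succ_self k) (by omega)
  have hqk1 : q n < q (k + 1) ^ 2 := by
    simpa [hP] using Nat.lt_of_not_le (by simpa [hP] using hnotP)
  -- the hypothesis at k: q (k+1) < q k ^ 2
  have hstep : q (k + 1) < q k ^ 2 := hN₀ k (le_trans (le_max_left _ _) hkN)
  have hqn4 : q n ≤ q k ^ 4 := by
    have : q (k + 1) ^ 2 ≤ (q k ^ 2) ^ 2 := Nat.pow_le_pow_left (le_of_lt hstep) 2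
    calc q n ≤ q (k + 1) ^ 2 := le_of_lt hqk1
    _ ≤ (q k ^ 2) ^ 2 := this
    _ = q k ^ 4 := by ring
  refine ⟨k, by omega, by omega, ?_, ?_⟩
  · -- (q n)^(1/4) ≤ q k
    have h4 : (q n : ℝ) ≤ (q k : ℝ) ^ (4 : ℕ) := by exact_mod_cast hqn4
    have hnn : (0 : ℝ) ≤ (q n : ℝ) := Nat.cast_nonneg _
    have hknn : (0 : ℝ) ≤ (q k : ℝ) := Nat.cast_nonneg _
    calc (q n : ℝ) ^ ((1:ℝ)/4) ≤ ((q k : ℝ) ^ (4 : ℕ)) ^ ((1:ℝ)/4) :=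
          Real.rpow_le_rpow hnn h4 (by norm_num)
    _ = (q k : ℝ) := by
          rw [← Real.rpow_natCast (q k : ℝ) 4, ← Real.rpow_mul hknn]
          norm_num
  · -- q k ≤ (q n)^(1/2)
    have h2 : (q k : ℝ) ^ (2 : ℕ) ≤ (q n : ℝ) := by exact_mod_cast hPk
    have hknn : (0 : ℝ) ≤ (q k : ℝ) := Nat.cast_nonneg _
    have hknn2 : (0 : ℝ) ≤ (q k : ℝ) ^ (2 : ℕ) := by positivity
    calc (q k : ℝ) = ((q k : ℝ) ^ (2 : ℕ)) ^ ((1:ℝ)/2) := by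
          rw [← Real.rpow_natCast (q k : ℝ) 2, ← Real.rpow_mul hknn]
          norm_num
    _ ≤ (q n : ℝ) ^ ((1:ℝ)/2) := Real.rpow_le_rpow hknn2 h2 (by norm_num)
end

section
/- Let α be irrational with convergent denominators q_n, satisfying ‖q_nα‖ < 1/q_{n+1}. If q_n·‖q_nα‖ < 1/2 then ‖q_n²α‖ = q_n·‖q_nα‖. If instead q_n·‖q_nα‖ ≥ 1/2, then q_{n+1} < 2q_n, and since q_{n+2} > 2q_n we get q_n·‖q_{n+1}α‖ < 1/2 and hence ‖q_n q_{n+1}α‖ = q_n·‖q_{n+1}α‖. -/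
open GenContFract

lemma round_eq_of_abs (x : ℝ) (k : ℤ) (h : |x - k| < 1/2) : round x = k := by
  rw [round_eq, Int.floor_eq_iff]
  rw [abs_lt] at h
  constructor <;> push_cast <;> linarith [h.1, h.2]

lemma nint_nonneg (x : ℝ) : 0 ≤ nint x := abs_nonneg _

lemma nint_mul (m : ℕ) (β : ℝ) (h : (m : ℝ) * nint β < 1/2) :
    nint ((m : ℝ) * β) = (m : ℝ) * nint β := by
  rcases Nat.eq_zero_or_pos m with rfl | hm
  · simp [nint]
  have hk : |(m : ℝ) * β - ((m : ℤ) * round β : ℤ)| = (m : ℝ) * nint β := by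
    push_cast
    rw [← mul_sub, abs_mul, abs_of_nonneg (by positivity : (0:ℝ) ≤ (m:ℝ))]
    rfl
  have hr : round ((m : ℝ) * β) = (m : ℤ) * round β :=
    round_eq_of_abs _ _ (by rw [hk]; exact h)
  rw [nint, hr, hk]

lemma contsAux_int (v : ℝ) (m : ℕ) :
    (∃ a : ℤ, ((GenContFract.of v).contsAux m).a = a) ∧ (∃ b : ℤ, ((GenContFract.of v).contsAux m).b = b) := by
  induction m using Nat.strong_induction_on with
  | _ m IH =>
    match m with
    | 0 => exact ⟨⟨1, by simp [contsAux]⟩, ⟨0, by simp [contsAux]⟩⟩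
    | 1 => exact ⟨⟨⌊v⌋, by simp [contsAux, of_h_eq_floor]⟩, ⟨1, by simp [contsAux]⟩⟩
    | (k+2) =>
      rcases h : (GenContFract.of v).s.get? k with _ | gp
      · have : (GenContFract.of v).contsAux (k+2) = (GenContFract.of v).contsAux (k+1) := by
          simp [contsAux, h]
        rw [this]; exact IH (k+1) (by omega)
      · obtain ⟨ha, hb⟩ := of_partNum_eq_one_and_exists_int_partDen_eq h
        obtain ⟨z, hz⟩ := hb
        obtain ⟨⟨pa, hpa⟩, ⟨pb, hpb⟩⟩ := IH k (by omega)
        obtain ⟨⟨qa, hqa⟩, ⟨qb, hqb⟩⟩ := IH (k+1) (by omega)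
        have : (GenContFract.of v).contsAux (k+2) =
            nextConts gp.a gp.b ((GenContFract.of v).contsAux k) ((GenContFract.of v).contsAux (k+1)) := by
          simp [contsAux, h]
        rw [this]
        constructor
        · exact ⟨z * qa + pa, by simp [nextConts, nextNum, ha, hz, hpa, hqa]⟩
        · exact ⟨z * qb + pb, by simp [nextConts, nextDen, ha, hz, hpb, hqb]⟩

lemma nums_int (v : ℝ) (n : ℕ) : ∃ a : ℤ, (GenContFract.of v).nums n = a := by
  rw [num_eq_conts_a, nth_cont_eq_succ_nth_contAux]
  exact (contsAux_int v (n+1)).1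

/-- for an irrational `α` with convergent denominators `q_n`:
if `q_n‖q_nα‖ < 1/2` then `‖q_n²α‖ = q_n‖q_nα‖`; if instead `q_n‖q_nα‖ ≥ 1/2`
then `q_{n+1} < 2q_n`, `q_n‖q_{n+1}α‖ < 1/2` and `‖q_n q_{n+1}α‖ = q_n‖q_{n+1}α‖`. -/
theorem nearest_integer_multiples
    (α : ℝ) (hα : Irrational α)
    (q : ℕ → ℕ) (hq : ∀ n, (q n : ℝ) = (GenContFract.of α).dens n) (n : ℕ) :
    ((q n : ℝ) * nint ((q n : ℝ) * α) < 1/2 →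
      nint ((q n : ℝ) ^ 2 * α) = (q n : ℝ) * nint ((q n : ℝ) * α)) ∧
    (1/2 ≤ (q n : ℝ) * nint ((q n : ℝ) * α) →
      (q (n+1) : ℝ) < 2 * (q n : ℝ) ∧
      (q n : ℝ) * nint ((q (n+1) : ℝ) * α) < 1/2 ∧
      nint ((q n : ℝ) * (q (n+1) : ℝ) * α) = (q n : ℝ) * nint ((q (n+1) : ℝ) * α)) := by
  -- never terminates
  have hterm : ∀ m, ¬ (GenContFract.of α).TerminatedAt m := by
    intro m hm
    obtain ⟨r, hr⟩ := exists_rat_eq_of_terminates ⟨m, hm⟩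
    exact hα ⟨r, hr.symm⟩
  -- denominators positive
  have hpos : ∀ m, (0 : ℝ) < (q m : ℝ) := by
    intro m
    rw [hq]
    have h1 : (Nat.fib (m+1) : ℝ) ≤ (GenContFract.of α).dens m := by
      apply succ_nth_fib_le_of_nth_den
      cases m with
      | zero => exact Or.inl rfl
      | succ k => exact Or.inr (hterm k)
    have : (1:ℝ) ≤ (Nat.fib (m+1) : ℝ) := by
      exact_mod_cast Nat.fib_pos.2 (Nat.succ_pos m)
    linarith
  -- nint (q m α) < 1 / q (m+1)
  have hbound : ∀ m, nint ((q m : ℝ) * α) < 1 / (q (m+1) : ℝ) := by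
    intro m
    obtain ⟨p, hp⟩ := nums_int α m
    have habs := abs_sub_convs_le (hterm m)
    rw [conv_eq_num_div_den, hp] at habs
    have hqm := hpos m
    have hqm1 := hpos (m+1)
    rw [hq m, hq (m+1)] at *
    have h2 : |(GenContFract.of α).dens m * α - (p:ℝ)| ≤ 1 / (GenContFract.of α).dens (m+1) := by
      have key : (GenContFract.of α).dens m * α - (p:ℝ) =
          (GenContFract.of α).dens m * (α - (p:ℝ) / (GenContFract.of α).dens m) := by
        field_simp
      rw [key, abs_mul, abs_of_pos hqm]
      calc (GenContFract.of α).dens m * |α - (p:ℝ) / (GenContFract.of α).dens m|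
          ≤ (GenContFract.of α).dens m * (1 / ((GenContFract.of α).dens m * (GenContFract.of α).dens (m+1))) :=
            mul_le_mul_of_nonneg_left habs (le_of_lt hqm)
        _ = 1 / (GenContFract.of α).dens (m+1) := by field_simp
    have h3 : nint ((GenContFract.of α).dens m * α) ≤ 1 / (GenContFract.of α).dens (m+1) :=
      le_trans (round_le _ p) h2
    -- strictness from irrationality
    have hirr : Irrational ((GenContFract.of α).dens m * α - (round ((GenContFract.of α).dens m * α) : ℤ)) := by
      have h4 : Irrational ((GenContFract.of α).dens m * α) := by
        rw [← hq m]
        have hq0 : q m ≠ 0 := by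
          have h5 := hqm
          rw [← hq m] at h5
          exact_mod_cast h5.ne'
        exact hα.natCast_mul hq0
      exact h4.sub_intCast _
    rcases lt_or_eq_of_le h3 with h | h
    · exact h
    · exfalso
      rw [nint] at h
      rcases abs_eq (by positivity : (0:ℝ) ≤ 1 / (GenContFract.of α).dens (m+1)) |>.mp h with h5 | h5
      · apply hirr.ne_rat ((1 : ℚ) / (q (m+1) : ℚ)) ; rw [h5, ← hq (m+1)]; push_cast; ring
      · apply hirr.ne_rat (-((1 : ℚ) / (q (m+1) : ℚ))); rw [h5, ← hq (m+1)]; push_cast; ring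
  -- q_{n+2} ≥ 2 q_n
  have hq2 : 2 * (q n : ℝ) ≤ (q (n+2) : ℝ) := by
    obtain ⟨gp, hgp⟩ := Option.ne_none_iff_exists'.mp (hterm (n+1))
    have ha : gp.a = 1 := of_partNum_eq_one (partNum_eq_s_a hgp)
    have hb : (1:ℝ) ≤ gp.b := of_one_le_get?_partDen (partDen_eq_s_b hgp)
    have hrec := dens_recurrence hgp rfl rfl
    have hmono : (GenContFract.of α).dens n ≤ (GenContFract.of α).dens (n+1) := of_den_mono
    have h0 := hpos n
    rw [hq n] at h0
    rw [hq n, hq (n+2), hrec, ha]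
    nlinarith [hpos (n+1), hq (n+1)]
  constructor
  · intro h
    have := nint_mul (q n) ((q n : ℝ) * α) h
    rw [← this]; congr 1; ring
  · intro h
    have hb1 := hbound n
    have hb2 := hbound (n+1)
    have h0 := hpos n
    have h1 := hpos (n+1)
    refine ⟨?_, ?_, ?_⟩
    · have : 1/2 < (q n : ℝ) * (1 / (q (n+1) : ℝ)) := by
        calc (1:ℝ)/2 ≤ (q n : ℝ) * nint ((q n : ℝ) * α) := h
          _ < _ := by exact mul_lt_mul_of_pos_left hb1 h0
      rw [mul_one_div, lt_div_iff₀ h1] at this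
      linarith
    · have h2 : nint ((q (n+1) : ℝ) * α) < 1 / (q (n+2) : ℝ) := hb2
      have h3 : (1:ℝ) / (q (n+2) : ℝ) ≤ 1 / (2 * (q n : ℝ)) := by
        apply one_div_le_one_div_of_le (by linarith) hq2
      have : (q n : ℝ) * nint ((q (n+1) : ℝ) * α) < (q n : ℝ) * (1 / (2 * (q n : ℝ))) :=
        mul_lt_mul_of_pos_left (lt_of_lt_of_le h2 h3) h0
      rw [mul_one_div] at this
      calc (q n : ℝ) * nint ((q (n+1) : ℝ) * α) < (q n : ℝ) / (2 * (q n : ℝ)) := this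
        _ = 1/2 := by rw [div_eq_iff (by linarith : 2 * (q n : ℝ) ≠ 0)]; ring
    · have := nint_mul (q n) ((q (n+1) : ℝ) * α) ?_
      · rw [← this]; congr 1; ring
      · -- repeat the bound
        have h2 : nint ((q (n+1) : ℝ) * α) < 1 / (q (n+2) : ℝ) := hb2
        have h3 : (1:ℝ) / (q (n+2) : ℝ) ≤ 1 / (2 * (q n : ℝ)) :=
          one_div_le_one_div_of_le (by linarith) hq2
        have h4 : (q n : ℝ) * nint ((q (n+1) : ℝ) * α) < (q n : ℝ) * (1 / (2 * (q n : ℝ))) :=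
          mul_lt_mul_of_pos_left (lt_of_lt_of_le h2 h3) h0
        rw [mul_one_div] at h4
        calc (q n : ℝ) * nint ((q (n+1) : ℝ) * α) < (q n : ℝ) / (2 * (q n : ℝ)) := h4
          _ = 1/2 := by rw [div_eq_iff (by linarith : 2 * (q n : ℝ) ≠ 0)]; ring
end

section
/- For every ε > 0 there is a constant C(ε) such that for any irrational α with convergent denominators q_k, any k ≥ 1, and any real c with 1 ≤ c ≤ q_k: ∑_{q_k ≤ |q| < q_{k+1}} (1/|q|^{1+ε})·min{1/‖qα‖, c} ≤ C(ε)·log(c+1)/q_k^{ε}. -/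
open Finset

lemma min_le_two_mul_div (a b : ℝ) (ha : 0 < a) (hb : 0 < b) :
    min a b ≤ 2 * a * b / (a + b) := by
  rw [le_div_iff₀ (by positivity)]
  nlinarith [min_le_left a b, min_le_right a b]

lemma telescope_sum (c B : ℝ) (hc : 0 < c) (hB : 0 < B) (Q : ℕ) :
    ∑ s ∈ Finset.range Q, 1 / ((s + 1 : ℝ) * c + B)
      ≤ (Real.log ((Q : ℝ) * c + B) - Real.log B) / c := by
  induction Q with
  | zero => simp
  | succ n ih =>
    rw [Finset.sum_range_succ]
    have h1 : (0:ℝ) < (n : ℝ) * c + B := by positivity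
    have h2 : (0:ℝ) < ((n : ℝ) + 1) * c + B := by positivity
    have hlog := Real.log_le_sub_one_of_pos (show (0:ℝ) < ((n:ℝ)*c+B)/(((n:ℝ)+1)*c+B) by positivity)
    rw [Real.log_div h1.ne' h2.ne'] at hlog
    have key : 1 / (((n:ℝ) + 1) * c + B)
        ≤ (Real.log (((n:ℝ)+1)*c + B) - Real.log ((n:ℝ)*c + B)) / c := by
      rw [div_le_div_iff₀ h2 hc]
      have h3 : ((n:ℝ)*c+B)/(((n:ℝ)+1)*c+B) - 1 = -c / (((n:ℝ)+1)*c+B) := by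
        field_simp; ring
      rw [h3] at hlog
      have h4 : -c / (((n:ℝ)+1)*c+B) * (((n:ℝ)+1)*c+B) = -c := by field_simp
      nlinarith [mul_le_mul_of_nonneg_right hlog h2.le]
    have hsplit : (Real.log (((n:ℝ)+1)*c+B) - Real.log B)/c
        = (Real.log (((n:ℝ)+1)*c+B) - Real.log ((n:ℝ)*c+B))/c
          + (Real.log ((n:ℝ)*c+B) - Real.log B)/c := by ring
    push_cast
    push_cast at ih
    linarith

lemma basic_sum (Q : ℕ) (hQ : 1 ≤ Q) (c : ℝ) (hc : 1 ≤ c) :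
    ∑ r ∈ Finset.range Q, min c (3 * (Q:ℝ) / ((r:ℝ) + 1))
      ≤ 6 * (Q:ℝ) * Real.log (c + 1) := by
  have hQ0 : (0:ℝ) < Q := by exact_mod_cast hQ
  have hc0 : (0:ℝ) < c := by linarith
  have step1 : ∀ r ∈ Finset.range Q, min c (3 * (Q:ℝ) / ((r:ℝ) + 1))
      ≤ 6 * (Q:ℝ) * c / (((r:ℝ) + 1) * c + 3 * Q) := by
    intro r _
    have hb : (0:ℝ) < 3 * (Q:ℝ) / ((r:ℝ)+1) := by positivity
    have := min_le_two_mul_div c _ hc0 hb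
    calc min c (3 * (Q:ℝ) / ((r:ℝ) + 1)) ≤ 2 * c * (3*(Q:ℝ)/((r:ℝ)+1)) / (c + 3*(Q:ℝ)/((r:ℝ)+1)) := this
    _ = 6 * (Q:ℝ) * c / (((r:ℝ) + 1) * c + 3 * Q) := by
        have hr1 : ((r:ℝ)+1) ≠ 0 := by positivity
        have hden : c + 3*(Q:ℝ)/((r:ℝ)+1) ≠ 0 := by positivity
        field_simp
        ring
  have step2 := telescope_sum c (3 * Q) hc0 (by positivity) Q
  calc ∑ r ∈ Finset.range Q, min c (3 * (Q:ℝ) / ((r:ℝ) + 1))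
      ≤ ∑ r ∈ Finset.range Q, 6 * (Q:ℝ) * c / (((r:ℝ) + 1) * c + 3 * Q) :=
        Finset.sum_le_sum step1
    _ = 6 * (Q:ℝ) * c * ∑ r ∈ Finset.range Q, 1 / (((r:ℝ) + 1) * c + 3 * Q) := by
        rw [Finset.mul_sum]; exact Finset.sum_congr rfl fun r _ => by ring
    _ ≤ 6 * (Q:ℝ) * c * ((Real.log ((Q:ℝ) * c + 3*Q) - Real.log (3*Q)) / c) := by
        apply mul_le_mul_of_nonneg_left step2 (by positivity)
    _ = 6 * (Q:ℝ) * (Real.log ((Q:ℝ) * c + 3*Q) - Real.log (3*Q)) := by field_simp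
    _ ≤ 6 * (Q:ℝ) * Real.log (c + 1) := by
        apply mul_le_mul_of_nonneg_left _ (by positivity)
        rw [← Real.log_div (by positivity) (by positivity)]
        apply Real.log_le_log (by positivity)
        rw [div_le_iff₀ (by positivity)]
        nlinarith

lemma residue_sum (Q : ℕ) (hQ : 1 ≤ Q) (c : ℝ) (hc : 1 ≤ c) :
    ∑ r ∈ Finset.range Q, min c (3 * (Q:ℝ) / ((min r (Q - r) : ℕ) + 1))
      ≤ 12 * (Q:ℝ) * Real.log (c + 1) := by
  have hc0 : (0:ℝ) < c := by linarith
  have hQ0 : (0:ℝ) < Q := by exact_mod_cast hQ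
  have key : ∀ r ∈ Finset.range Q, min c (3 * (Q:ℝ) / ((min r (Q - r) : ℕ) + 1))
      ≤ min c (3 * (Q:ℝ) / ((r:ℝ) + 1)) + min c (3 * (Q:ℝ) / (((Q - r : ℕ):ℝ) + 1)) := by
    intro r hr
    have h1 : (0:ℝ) ≤ min c (3 * (Q:ℝ) / ((r:ℝ) + 1)) := le_min hc0.le (by positivity)
    have h2 : (0:ℝ) ≤ min c (3 * (Q:ℝ) / (((Q - r : ℕ):ℝ) + 1)) := le_min hc0.le (by positivity)
    rcases le_total r (Q - r) with h | h
    · rw [min_eq_left h]; linarith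
    · rw [min_eq_right h]; linarith
  have reflect : ∑ r ∈ Finset.range Q, min c (3 * (Q:ℝ) / (((Q - r : ℕ):ℝ) + 1))
      ≤ ∑ r ∈ Finset.range Q, min c (3 * (Q:ℝ) / ((r:ℝ) + 1)) := by
    rw [← Finset.sum_range_reflect (fun r => min c (3 * (Q:ℝ) / (((Q - r : ℕ):ℝ) + 1))) Q]
    apply Finset.sum_le_sum
    intro r hr
    have hrQ : r < Q := Finset.mem_range.mp hr
    have heq : Q - (Q - 1 - r) = r + 1 := by omega
    rw [heq]
    apply min_le_min (le_refl c)
    apply div_le_div_of_nonneg_left (by positivity) (by positivity)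
    push_cast; linarith
  have hbs := basic_sum Q hQ c hc
  calc ∑ r ∈ Finset.range Q, min c (3 * (Q:ℝ) / ((min r (Q - r) : ℕ) + 1))
      ≤ ∑ r ∈ Finset.range Q, (min c (3 * (Q:ℝ) / ((r:ℝ) + 1))
          + min c (3 * (Q:ℝ) / (((Q - r : ℕ):ℝ) + 1))) := Finset.sum_le_sum key
    _ = ∑ r ∈ Finset.range Q, min c (3 * (Q:ℝ) / ((r:ℝ) + 1))
        + ∑ r ∈ Finset.range Q, min c (3 * (Q:ℝ) / (((Q - r : ℕ):ℝ) + 1)) :=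
        Finset.sum_add_distrib
    _ ≤ 12 * (Q:ℝ) * Real.log (c + 1) := by linarith

lemma cf_not_term (α : ℝ) (hirr : Irrational α) (n : ℕ) :
    ¬(GenContFract.of α).TerminatedAt n := by
  intro h
  have hterm : (GenContFract.of α).Terminates := ⟨n, h⟩
  obtain ⟨q, hq⟩ := GenContFract.exists_rat_eq_of_terminates hterm
  exact hirr ⟨q, hq.symm⟩

lemma cf_num_int (α : ℝ) (hirr : Irrational α) :
    ∀ n, ∃ z : ℤ, (GenContFract.of α).nums n = (z:ℝ) := by
  have hgp : ∀ n, ∃ gp : GenContFract.Pair ℝ, (GenContFract.of α).s.get? n = some gp := by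
    intro n
    exact Option.ne_none_iff_exists'.mp (cf_not_term α hirr n)
  have key : ∀ n, (∃ z : ℤ, (GenContFract.of α).nums n = (z:ℝ)) ∧
      (∃ z : ℤ, (GenContFract.of α).nums (n+1) = (z:ℝ)) := by
    intro n
    induction n with
    | zero =>
      constructor
      · exact ⟨⌊α⌋, by rw [GenContFract.zeroth_num_eq_h, GenContFract.of_h_eq_floor]⟩
      · obtain ⟨gp, hgp0⟩ := hgp 0
        obtain ⟨ha, z, hb⟩ := GenContFract.of_partNum_eq_one_and_exists_int_partDen_eq hgp0
        refine ⟨z * ⌊α⌋ + 1, ?_⟩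
        rw [GenContFract.first_num_eq hgp0, GenContFract.of_h_eq_floor, ha, hb]
        push_cast; ring
    | succ n ih =>
      refine ⟨ih.2, ?_⟩
      obtain ⟨gp, hgpn⟩ := hgp (n+1)
      obtain ⟨ha, z, hb⟩ := GenContFract.of_partNum_eq_one_and_exists_int_partDen_eq hgpn
      obtain ⟨z0, hz0⟩ := ih.1
      obtain ⟨z1, hz1⟩ := ih.2
      refine ⟨z * z1 + z0, ?_⟩
      rw [GenContFract.nums_recurrence hgpn hz0 hz1, ha, hb]
      push_cast; ring
  exact fun n => (key n).1

lemma cf_dens_ge_one (α : ℝ) : ∀ n, (1:ℝ) ≤ (GenContFract.of α).dens n := by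
  intro n
  induction n with
  | zero => rw [GenContFract.zeroth_den_eq_one]
  | succ n ih => exact le_trans ih (GenContFract.of_den_mono)

lemma cf_main_facts (α : ℝ) (hirr : Irrational α) (q : ℕ → ℕ)
    (hq : ∀ n, (q n : ℝ) = (GenContFract.of α).dens n) (k : ℕ) :
    ∃ p : ℤ, IsCoprime ((q k : ℤ)) p ∧
      |α - (p:ℝ)/(q k)| ≤ 1/((q k : ℝ) * (q (k+1) : ℝ)) := by
  obtain ⟨pk, hpk⟩ := cf_num_int α hirr k
  obtain ⟨pk1, hpk1⟩ := cf_num_int α hirr (k+1)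
  refine ⟨pk, ?_, ?_⟩
  · -- determinant
    have hdet := SimpContFract.determinant (s := SimpContFract.of α) (cf_not_term α hirr k)
    have hco : (↑(SimpContFract.of α) : GenContFract ℝ) = GenContFract.of α := rfl
    rw [hco] at hdet
    rw [hpk, hpk1, ← hq k, ← hq (k+1)] at hdet
    have hdet' : pk * (q (k+1) : ℤ) - (q k : ℤ) * pk1 = (-1)^(k+1) := by
      exact_mod_cast hdet
    set e : ℤ := (-1)^(k+1) with he
    have hee : e * e = 1 := by
      rw [he, ← pow_add]
      exact Even.neg_one_pow ⟨k+1, rfl⟩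
    exact ⟨-(e * pk1), e * (q (k+1) : ℤ), by linear_combination e * hdet' + hee⟩
  · have happ := GenContFract.abs_sub_convs_le (cf_not_term α hirr k)
    rw [GenContFract.conv_eq_num_div_den, hpk, ← hq k, ← hq (k+1)] at happ
    exact happ

lemma point_bound (α : ℝ) (Q Q' : ℕ) (hQ : 1 ≤ Q) (hQ' : 1 ≤ Q') (p : ℤ)
    (happ : |α - (p:ℝ)/Q| ≤ 1/((Q:ℝ)*Q')) (c : ℝ) (hc : 1 ≤ c) (hcQ : c ≤ Q)
    (i : ℤ) (hi : |i| ≤ (Q':ℤ)) (r : ℕ) (hr : (r:ℤ) = (i*p) % Q) :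
    min (1 / nint ((i:ℝ) * α)) c ≤ min c (3 * (Q:ℝ) / ((min r (Q - r) : ℕ) + 1)) := by
  have hQ0 : (0:ℝ) < Q := by exact_mod_cast hQ
  have hQ0' : (0:ℤ) < Q := by exact_mod_cast hQ
  have hQ'0 : (0:ℝ) < Q' := by exact_mod_cast hQ'
  set t : ℕ := min r (Q - r) with ht
  have hrQ : r < Q := by
    have := Int.emod_lt_of_pos (i*p) hQ0'
    omega
  have ht1 : t ≤ r := min_le_left _ _
  have ht2 : t ≤ Q - r := min_le_right _ _
  -- lower bound on nint
  have hnint : ((t:ℝ) - 1)/Q ≤ nint ((i:ℝ) * α) := by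
    set n : ℤ := round ((i:ℝ)*α) with hn
    have hint : (t:ℤ) ≤ |i*p - n*Q| := by
      have hdm := Int.mul_ediv_add_emod (i*p) Q
      set s : ℤ := (i*p) / Q with hs
      have hval : i*p - n*Q = Q*(s - n) + r := by
        rw [hr]; linarith [hdm]
      rcases lt_trichotomy (s - n) 0 with h | h | h
      · apply le_abs.mpr; right
        have : Q*(s-n) ≤ -Q := by nlinarith
        omega
      · apply le_abs.mpr; left
        rw [hval, h]; omega
      · apply le_abs.mpr; left
        have : (Q:ℤ) ≤ Q*(s-n) := by nlinarith
        omega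
    have e1 : (t:ℝ)/Q ≤ |(i:ℝ)*((p:ℝ)/Q) - (n:ℝ)| := by
      have : (i:ℝ)*((p:ℝ)/Q) - (n:ℝ) = ((i*p - n*Q : ℤ) : ℝ)/Q := by
        push_cast; field_simp
      rw [this, abs_div, abs_of_pos hQ0]
      apply div_le_div_of_nonneg_right ?_ hQ0.le
      rw [← Int.cast_abs]; exact_mod_cast hint
    have e2 : |(i:ℝ)*α - (i:ℝ)*((p:ℝ)/Q)| ≤ 1/Q := by
      rw [← mul_sub, abs_mul]
      calc |(i:ℝ)| * |α - (p:ℝ)/Q| ≤ (Q':ℝ) * (1/((Q:ℝ)*Q')) := by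
            apply mul_le_mul ?_ happ (abs_nonneg _) hQ'0.le
            exact_mod_cast hi
        _ = 1/Q := by field_simp
    have tri : |(i:ℝ)*((p:ℝ)/Q) - (n:ℝ)| - |(i:ℝ)*α - (i:ℝ)*((p:ℝ)/Q)|
        ≤ |(i:ℝ)*α - (n:ℝ)| := by
      have := abs_sub_abs_le_abs_sub ((i:ℝ)*((p:ℝ)/Q) - (n:ℝ)) ((i:ℝ)*((p:ℝ)/Q) - (i:ℝ)*α)
      have h2 : (i:ℝ)*((p:ℝ)/Q) - (n:ℝ) - ((i:ℝ)*((p:ℝ)/Q) - (i:ℝ)*α) = (i:ℝ)*α - n := by ring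
      rw [h2] at this
      rw [abs_sub_comm ((i:ℝ)*α) ((i:ℝ)*((p:ℝ)/Q))]
      linarith
    show ((t:ℝ) - 1)/Q ≤ |(i:ℝ)*α - (n:ℝ)|
    have : ((t:ℝ)-1)/Q = (t:ℝ)/Q - 1/Q := by ring
    linarith
  -- conclude
  have hnint0 : 0 ≤ nint ((i:ℝ)*α) := abs_nonneg _
  by_cases hcase : t ≤ 1
  · apply le_min (min_le_right _ _)
    apply le_trans (min_le_right _ _)
    rw [le_div_iff₀ (by positivity)]
    have : (t:ℝ) ≤ 1 := by exact_mod_cast hcase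
    nlinarith
  · push_neg at hcase
    have ht2' : (2:ℝ) ≤ t := by exact_mod_cast hcase
    have hpos : (0:ℝ) < ((t:ℝ)-1)/Q := by
      apply div_pos (by linarith) hQ0
    apply le_min (min_le_right _ _)
    apply le_trans (min_le_left _ _)
    have h1 : 1 / nint ((i:ℝ)*α) ≤ (Q:ℝ)/((t:ℝ)-1) := by
      rw [div_le_div_iff₀ (lt_of_lt_of_le hpos hnint) (by linarith)]
      calc 1 * ((t:ℝ)-1) = ((t:ℝ)-1)/Q * Q := by field_simp
        _ ≤ nint ((i:ℝ)*α) * Q := by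
            exact mul_le_mul_of_nonneg_right hnint hQ0.le
        _ = ↑Q * nint ((i:ℝ)*α) := by ring
    apply le_trans h1
    rw [div_le_div_iff₀ (by linarith) (by positivity)]
    nlinarith

lemma block_bound (α : ℝ) (Q Q' : ℕ) (hQ : 1 ≤ Q) (hQ' : 1 ≤ Q') (p : ℤ)
    (happ : |α - (p:ℝ)/Q| ≤ 1/((Q:ℝ)*Q')) (hcop : IsCoprime (Q:ℤ) p)
    (c : ℝ) (hc : 1 ≤ c) (hcQ : c ≤ Q)
    (B : Finset ℤ) (m : ℤ) (hwin : ∀ i ∈ B, m ≤ i ∧ i < m + Q)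
    (habs : ∀ i ∈ B, |i| ≤ (Q':ℤ)) :
    ∑ i ∈ B, min (1 / nint ((i:ℝ) * α)) c ≤ 12 * (Q:ℝ) * Real.log (c + 1) := by
  have hQ0 : (0:ℤ) < Q := by exact_mod_cast hQ
  set g : ℕ → ℝ := fun r => min c (3 * (Q:ℝ) / ((min r (Q - r) : ℕ) + 1)) with hg
  set ρ : ℤ → ℕ := fun i => ((i * p) % (Q:ℤ)).toNat with hρ
  have hρ_eq : ∀ i : ℤ, ((ρ i : ℤ)) = (i * p) % (Q:ℤ) := by
    intro i
    exact Int.toNat_of_nonneg (Int.emod_nonneg _ hQ0.ne')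
  have step1 : ∀ i ∈ B, min (1 / nint ((i:ℝ) * α)) c ≤ g (ρ i) := by
    intro i hi
    exact point_bound α Q Q' hQ hQ' p happ c hc hcQ i (habs i hi) (ρ i) (hρ_eq i)
  have hinj : ∀ i ∈ B, ∀ i' ∈ B, ρ i = ρ i' → i = i' := by
    intro i hi i' hi' hee
    have h1 : (i * p) % (Q:ℤ) = (i' * p) % (Q:ℤ) := by
      rw [← hρ_eq i, ← hρ_eq i', hee]
    have h2 : (Q:ℤ) ∣ (i' - i) * p := by
      have : i * p ≡ i' * p [ZMOD (Q:ℤ)] := h1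
      have := Int.ModEq.dvd this
      calc (Q:ℤ) ∣ i' * p - i * p := this
        _ = (i' - i) * p := by ring
    have h3 : (Q:ℤ) ∣ i' - i := hcop.dvd_of_dvd_mul_right h2
    have h4 : |i' - i| < Q := by
      have := hwin i hi; have := hwin i' hi'
      rw [abs_lt]; omega
    have := Int.eq_zero_of_abs_lt_dvd h3 h4
    omega
  have gnonneg : ∀ r, 0 ≤ g r := fun r => le_min (by linarith) (by positivity)
  calc ∑ i ∈ B, min (1 / nint ((i:ℝ) * α)) c ≤ ∑ i ∈ B, g (ρ i) := Finset.sum_le_sum step1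
    _ = ∑ r ∈ B.image ρ, g r := (Finset.sum_image hinj).symm
    _ ≤ ∑ r ∈ Finset.range Q, g r := by
        apply Finset.sum_le_sum_of_subset_of_nonneg
        · intro r hrr
          obtain ⟨i, _, rfl⟩ := Finset.mem_image.mp hrr
          rw [Finset.mem_range]
          have := Int.emod_lt_of_pos (i * p) hQ0
          have := hρ_eq i
          omega
        · intro r _ _; exact gnonneg r
    _ ≤ 12 * (Q:ℝ) * Real.log (c + 1) := residue_sum Q hQ c hc

lemma fiber_bound (α : ℝ) (Q Q' : ℕ) (hQ : 1 ≤ Q) (hQ' : 1 ≤ Q') (p : ℤ)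
    (happ : |α - (p:ℝ)/Q| ≤ 1/((Q:ℝ)*Q')) (hcop : IsCoprime (Q:ℤ) p)
    (c : ℝ) (hc : 1 ≤ c) (hcQ : c ≤ Q)
    (j : ℕ) (B : Finset ℤ)
    (hB : ∀ i ∈ B, j * Q ≤ i.natAbs ∧ i.natAbs < (j+1) * Q ∧ |i| ≤ (Q':ℤ)) :
    ∑ i ∈ B, min (1 / nint ((i:ℝ) * α)) c ≤ 24 * (Q:ℝ) * Real.log (c + 1) := by
  rw [← Finset.sum_filter_add_sum_filter_not B (fun i => 0 ≤ i)]
  have h1 : ∑ i ∈ B.filter (fun i => 0 ≤ i), min (1 / nint ((i:ℝ) * α)) c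
      ≤ 12 * (Q:ℝ) * Real.log (c + 1) := by
    apply block_bound α Q Q' hQ hQ' p happ hcop c hc hcQ _ ((j:ℤ) * Q)
    · intro i hi
      rw [Finset.mem_filter] at hi
      obtain ⟨h1, h2, _⟩ := hB i hi.1
      have := hi.2
      have h1' : (j:ℤ)*Q ≤ (i.natAbs:ℤ) := by exact_mod_cast h1
      have h2' : (i.natAbs:ℤ) < ((j:ℤ)+1)*Q := by exact_mod_cast h2
      have hk : ((j:ℤ)+1)*Q = (j:ℤ)*Q + Q := by ring
      constructor <;> omega
    · intro i hi
      rw [Finset.mem_filter] at hi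
      exact (hB i hi.1).2.2
  have h2 : ∑ i ∈ B.filter (fun i => ¬ 0 ≤ i), min (1 / nint ((i:ℝ) * α)) c
      ≤ 12 * (Q:ℝ) * Real.log (c + 1) := by
    apply block_bound α Q Q' hQ hQ' p happ hcop c hc hcQ _ (-(((j:ℤ)+1) * Q) + 1)
    · intro i hi
      rw [Finset.mem_filter] at hi
      obtain ⟨h1, h2, _⟩ := hB i hi.1
      have := hi.2
      have h1' : (j:ℤ)*Q ≤ (i.natAbs:ℤ) := by exact_mod_cast h1
      have h2' : (i.natAbs:ℤ) < ((j:ℤ)+1)*Q := by exact_mod_cast h2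
      have hk : ((j:ℤ)+1)*Q = (j:ℤ)*Q + Q := by ring
      constructor <;> omega
    · intro i hi
      rw [Finset.mem_filter] at hi
      exact (hB i hi.1).2.2
  linarith

/-- for every `ε > 0` there is `C(ε)` such that for every irrational `α`
with convergent denominators `q`, every `k ≥ 1` and every real `1 ≤ c ≤ q_k`,
`∑_{q_k ≤ |q| < q_{k+1}} |q|^{−1−ε}·min(1/‖qα‖, c) ≤ C(ε)·log(c+1)/q_k^ε`. -/
theorem sum_slice_min_upper_bound_eps (ε : ℝ) (hε : 0 < ε) :
    ∃ C : ℝ, 0 < C ∧ ∀ (α : ℝ), Irrational α →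
      ∀ (q : ℕ → ℕ), (∀ n, (q n : ℝ) = (GenContFract.of α).dens n) →
      ∀ k : ℕ, 1 ≤ k → ∀ c : ℝ, 1 ≤ c → c ≤ (q k : ℝ) →
      ∑ i ∈ (Finset.Ioo (-(q (k+1) : ℤ)) (q (k+1) : ℤ)).filter (fun i => (q k : ℤ) ≤ |i|),
          (1 / |(i : ℝ)| ^ ((1:ℝ) + ε)) * min (1 / nint ((i : ℝ) * α)) c
        ≤ C * Real.log (c + 1) / (q k : ℝ) ^ ε := by
  have hsum : Summable (fun n : ℕ => 1 / (n:ℝ) ^ ((1:ℝ) + ε)) :=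
    (Real.summable_one_div_nat_rpow).mpr (by linarith)
  set Z : ℝ := ∑' n : ℕ, 1 / (n:ℝ) ^ ((1:ℝ) + ε) with hZ
  have hZ1 : (1:ℝ) ≤ Z := by
    have h := Summable.le_tsum hsum 1 (fun i _ => by positivity)
    rw [← hZ] at h
    simpa [Real.one_rpow] using h
  refine ⟨24 * Z, by linarith, ?_⟩
  intro α hirr q hq k hk c hc hcQ
  set Q : ℕ := q k with hQdef
  set Q' : ℕ := q (k+1) with hQ'def
  have hQ1 : 1 ≤ Q := by
    have := cf_dens_ge_one α k; rw [← hq k] at this; exact_mod_cast this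
  have hQ'1 : 1 ≤ Q' := by
    have := cf_dens_ge_one α (k+1); rw [← hq (k+1)] at this; exact_mod_cast this
  have hQ0 : (0:ℝ) < Q := by exact_mod_cast hQ1
  have hQ0' : (0:ℕ) < Q := hQ1
  obtain ⟨p, hcop, happ⟩ := cf_main_facts α hirr q hq k
  set L : ℝ := Real.log (c + 1) with hL
  have hL0 : 0 ≤ L := Real.log_nonneg (by linarith)
  set S : Finset ℤ := (Finset.Ioo (-(Q':ℤ)) (Q':ℤ)).filter (fun i => (Q:ℤ) ≤ |i|) with hS
  set J : ℕ := Q' / Q with hJ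
  have hmaps : ∀ i ∈ S, i.natAbs / Q ∈ Finset.Icc 1 J := by
    intro i hi
    rw [hS, Finset.mem_filter, Finset.mem_Ioo] at hi
    obtain ⟨⟨hlo, hhi⟩, habs⟩ := hi
    rw [Int.abs_eq_natAbs] at habs
    have h1 : Q ≤ i.natAbs := by omega
    have h2 : i.natAbs ≤ Q' := by omega
    rw [Finset.mem_Icc]
    exact ⟨(Nat.one_le_div_iff hQ0').mpr h1, Nat.div_le_div_right h2⟩
  rw [← Finset.sum_fiberwise_of_maps_to hmaps]
  have hfiber : ∀ j ∈ Finset.Icc 1 J,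
      ∑ i ∈ S.filter (fun i => i.natAbs / Q = j),
          (1 / |(i : ℝ)| ^ ((1:ℝ) + ε)) * min (1 / nint ((i : ℝ) * α)) c
        ≤ (1 / ((j:ℝ) * Q) ^ ((1:ℝ) + ε)) * (24 * (Q:ℝ) * L) := by
    intro j hj
    rw [Finset.mem_Icc] at hj
    have hj1 : (1:ℝ) ≤ j := by exact_mod_cast hj.1
    have hjQ0 : (0:ℝ) < (j:ℝ) * Q := by positivity
    have hBprop : ∀ i ∈ S.filter (fun i => i.natAbs / Q = j),
        j * Q ≤ i.natAbs ∧ i.natAbs < (j+1) * Q ∧ |i| ≤ (Q':ℤ) := by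
      intro i hi
      rw [Finset.mem_filter, hS, Finset.mem_filter, Finset.mem_Ioo] at hi
      obtain ⟨⟨⟨hlo, hhi⟩, habs⟩, hfib⟩ := hi
      rw [Int.abs_eq_natAbs] at habs ⊢
      refine ⟨?_, ?_, by omega⟩
      · calc j * Q = i.natAbs / Q * Q := by rw [hfib]
          _ ≤ i.natAbs := Nat.div_mul_le_self _ _
      · have : i.natAbs / Q < j + 1 := by omega
        exact Nat.lt_mul_of_div_lt this hQ0'
    have hsum_min := fiber_bound α Q Q' hQ1 hQ'1 p happ hcop c hc hcQ j _ hBprop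
    have hterm : ∀ i ∈ S.filter (fun i => i.natAbs / Q = j),
        (1 / |(i : ℝ)| ^ ((1:ℝ) + ε)) * min (1 / nint ((i : ℝ) * α)) c
          ≤ (1 / ((j:ℝ) * Q) ^ ((1:ℝ) + ε)) * min (1 / nint ((i : ℝ) * α)) c := by
      intro i hi
      have h1 := (hBprop i hi).1
      have hle : (j:ℝ) * Q ≤ |(i:ℝ)| := by
        have h2 : ((j:ℤ) * Q) ≤ |i| := by
          rw [Int.abs_eq_natAbs]; exact_mod_cast h1
        calc (j:ℝ) * Q = (((j:ℤ) * Q : ℤ) : ℝ) := by push_cast; ring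
          _ ≤ ((|i| : ℤ) : ℝ) := by exact_mod_cast h2
          _ = |(i:ℝ)| := Int.cast_abs
      have hmin0 : 0 ≤ min (1 / nint ((i : ℝ) * α)) c := by
        apply le_min _ (by linarith)
        apply one_div_nonneg.mpr (abs_nonneg _)
      apply mul_le_mul_of_nonneg_right _ hmin0
      apply one_div_le_one_div_of_le (Real.rpow_pos_of_pos hjQ0 _)
      exact Real.rpow_le_rpow hjQ0.le hle (by linarith)
    calc ∑ i ∈ S.filter (fun i => i.natAbs / Q = j),
          (1 / |(i : ℝ)| ^ ((1:ℝ) + ε)) * min (1 / nint ((i : ℝ) * α)) c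
        ≤ ∑ i ∈ S.filter (fun i => i.natAbs / Q = j),
          (1 / ((j:ℝ) * Q) ^ ((1:ℝ) + ε)) * min (1 / nint ((i : ℝ) * α)) c :=
          Finset.sum_le_sum hterm
      _ = (1 / ((j:ℝ) * Q) ^ ((1:ℝ) + ε)) *
          ∑ i ∈ S.filter (fun i => i.natAbs / Q = j), min (1 / nint ((i : ℝ) * α)) c := by
          rw [Finset.mul_sum]
      _ ≤ (1 / ((j:ℝ) * Q) ^ ((1:ℝ) + ε)) * (24 * (Q:ℝ) * L) := by
          apply mul_le_mul_of_nonneg_left hsum_min (by positivity)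
  have halg : ∀ j ∈ Finset.Icc 1 J,
      (1 / ((j:ℝ) * Q) ^ ((1:ℝ) + ε)) * (24 * (Q:ℝ) * L)
        = (24 * L / (Q:ℝ) ^ ε) * (1 / (j:ℝ) ^ ((1:ℝ) + ε)) := by
    intro j hj
    rw [Finset.mem_Icc] at hj
    have hj0 : (0:ℝ) < j := by exact_mod_cast hj.1
    rw [Real.mul_rpow hj0.le hQ0.le, Real.rpow_add hQ0, Real.rpow_one]
    have h1 : (j:ℝ) ^ ((1:ℝ) + ε) ≠ 0 := (Real.rpow_pos_of_pos hj0 _).ne'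
    have h2 : (Q:ℝ) ^ ε ≠ 0 := (Real.rpow_pos_of_pos hQ0 _).ne'
    field_simp
  calc ∑ j ∈ Finset.Icc 1 J, ∑ i ∈ S.filter (fun i => i.natAbs / Q = j),
          (1 / |(i : ℝ)| ^ ((1:ℝ) + ε)) * min (1 / nint ((i : ℝ) * α)) c
      ≤ ∑ j ∈ Finset.Icc 1 J, (1 / ((j:ℝ) * Q) ^ ((1:ℝ) + ε)) * (24 * (Q:ℝ) * L) :=
        Finset.sum_le_sum hfiber
    _ = (24 * L / (Q:ℝ) ^ ε) * ∑ j ∈ Finset.Icc 1 J, 1 / (j:ℝ) ^ ((1:ℝ) + ε) := by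
        rw [Finset.mul_sum]
        exact Finset.sum_congr rfl halg
    _ ≤ (24 * L / (Q:ℝ) ^ ε) * Z := by
        apply mul_le_mul_of_nonneg_left _ (by positivity)
        exact Summable.sum_le_tsum _ (fun i _ => by positivity) hsum
    _ = 24 * Z * L / (Q:ℝ) ^ ε := by ring
end
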